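/- arXiv:1012.1062 — 4 statements merged into one kernel-verified Lean document; each statement's English description precedes it below -/
import Mathlib

section
/- In the Gauss decomposition T(u) = F(u)D(u)E(u) of shape mu, the blocks are given by quasideterminants: for all 1 <= a <= m+n, D_a(u) equals the quasideterminant of the a x a block array (T_{c,d}(u))_{1 <= c,d <= a} boxed at position (a,a), i.e. D_a(u) = T_{a,a}(u) - (T_{a,1}(u),...,T_{a,a-1}(u)) * ((T_{c,d}(u))_{1<=c,d<=a-1})^{-1} * (T_{1,a}(u),...,T_{a-1,a}(u))^T; and for all 1 <= a < b <= m+n, E_{a,b}(u) = D'_a(u) times the quasideterminant of the array with rows indexed 1,...,a-1,a and columns 1,...,a-1,b boxed at the (a,b) entry, while F_{b,a}(u) equals the quasideterminant of the array with rows 1,...,a-1,b and columns 1,...,a-1,a boxed at the (b,a) entry, times D'_a(u). -/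
open scoped BigOperators

noncomputable section

/-- The free algebra on generators `t_{ij}^{(r+1)}` (a triple `(i,j,r)` encodes the
generator `t_{ij}^{(r+1)}`). -/
abbrev YFree (I : Type) := FreeAlgebra ℂ (I × I × ℕ)

variable {I : Type} [DecidableEq I]

/-- `tF i j r` is the element `t_{ij}^{(r)}` of the free algebra; `t_{ij}^{(0)} = δ_{ij}`. -/
def tF (i j : I) : ℕ → YFree I
  | 0 => algebraMap ℂ (YFree I) (if i = j then 1 else 0)
  | r + 1 => FreeAlgebra.ι ℂ (i, j, r)

/-- `sgn b = (-1)^b`. -/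
def sgn (b : Bool) : ℂ := if b then -1 else 1

/-- The defining relations of the super Yangian with parity function `p`
(`p i = true` means that the index `i` is odd):
`[t_{ij}^{(r)}, t_{hk}^{(s)}] = (-1)^{|i||j|+|i||h|+|j||h|} Σ_{t=0}^{min(r,s)-1}
  (t_{hj}^{(t)} t_{ik}^{(r+s-1-t)} - t_{hj}^{(r+s-1-t)} t_{ik}^{(t)})`,
where the bracket is the supercommutator. -/
inductive YRel (p : I → Bool) : YFree I → YFree I → Prop
  | rel (i j h k : I) (r s : ℕ) :
      YRel p (tF i j r * tF h k s)
        (sgn ((p i != p j) && (p h != p k)) • (tF h k s * tF i j r)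
          + sgn (((p i && p j) != (p i && p h)) != (p j && p h)) •
            ∑ t ∈ Finset.range (min r s),
              (tF h j t * tF i k (r + s - 1 - t) - tF h j (r + s - 1 - t) * tF i k t))

/-- The super Yangian associated to the index set `I` with parity function `p`. -/
abbrev Yangian (p : I → Bool) := RingQuot (YRel p)

/-- The generator `t_{ij}^{(r)}` of the super Yangian. -/
def tY (p : I → Bool) (i j : I) (r : ℕ) : Yangian p :=
  RingQuot.mkAlgHom ℂ (YRel p) (tF i j r)

/-- The generating series `t_{ij}(u) = Σ_{r ≥ 0} t_{ij}^{(r)} u^{-r}`, viewed as a formal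
power series in the variable `u^{-1}`. -/
def tSer (p : I → Bool) (i j : I) : PowerSeries (Yangian p) :=
  PowerSeries.mk fun r => tY p i j r

/- ### Composition (block) setup.
`μ = (μ_0, …, μ_{m-1} | μ_m, …, μ_{m+n-1})` is a composition of `(M|N)`: the first `m`
blocks are even and the last `n` blocks are odd.  The super Yangian `Y(gl_{M|N})` is
realized on the index set `Σ a, Fin (μ a)` (a block index together with an entry index),
with the parity of an index determined by its block. -/

variable (m n : ℕ) (μ : Fin (m + n) → ℕ)

/-- Index set attached to the composition `μ`. -/
abbrev CIdx := Σ a : Fin (m + n), Fin (μ a)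

/-- Parity of an index: even in the first `m` blocks, odd in the last `n` blocks. -/
def pC : CIdx m n μ → Bool := fun x => decide (m ≤ (x.1 : ℕ))

/-- The super Yangian `Y(gl_{M|N})` realized on the index set of the composition `μ`. -/
abbrev Yc := Yangian (pC m n μ)

abbrev Rc := PowerSeries (Yc m n μ)

/-- The matrix `T(u)`. -/
def Tc : Matrix (CIdx m n μ) (CIdx m n μ) (Rc m n μ) := fun i j => tSer _ i j

/-- Indices lying in the blocks strictly before block `a`. -/
abbrev CICorner (a : Fin (m + n)) := {x : CIdx m n μ // (x.1 : ℕ) < (a : ℕ)}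

/-- The leading corner of `T(u)` consisting of the blocks strictly before block `a`. -/
def Acorner (a : Fin (m + n)) :
    Matrix (CICorner m n μ a) (CICorner m n μ a) (Rc m n μ) :=
  fun x y => Tc m n μ x.1 y.1

/-- The quasideterminant `D_a(u)` (the `a`-th diagonal Gauss block of `T(u)`). -/
def Dmat (a : Fin (m + n)) : Matrix (Fin (μ a)) (Fin (μ a)) (Rc m n μ) :=
  fun i j =>
    Tc m n μ ⟨a, i⟩ ⟨a, j⟩ -
      ∑ x : CICorner m n μ a, ∑ y : CICorner m n μ a,
        Tc m n μ ⟨a, i⟩ x.1 * Ring.inverse (Acorner m n μ a) x y * Tc m n μ y.1 ⟨a, j⟩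

/-- `D'_a(u) = D_a(u)^{-1}`. -/
def Dmat' (a : Fin (m + n)) : Matrix (Fin (μ a)) (Fin (μ a)) (Rc m n μ) :=
  Ring.inverse (Dmat m n μ a)

/-- The boxed quasideterminant appearing in the formula for `E_{a,b}(u)`. -/
def quasE (a b : Fin (m + n)) : Matrix (Fin (μ a)) (Fin (μ b)) (Rc m n μ) :=
  fun i j =>
    Tc m n μ ⟨a, i⟩ ⟨b, j⟩ -
      ∑ x : CICorner m n μ a, ∑ y : CICorner m n μ a,
        Tc m n μ ⟨a, i⟩ x.1 * Ring.inverse (Acorner m n μ a) x y * Tc m n μ y.1 ⟨b, j⟩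

/-- The boxed quasideterminant appearing in the formula for `F_{b,a}(u)`. -/
def quasF (b a : Fin (m + n)) : Matrix (Fin (μ b)) (Fin (μ a)) (Rc m n μ) :=
  fun i j =>
    Tc m n μ ⟨b, i⟩ ⟨a, j⟩ -
      ∑ x : CICorner m n μ a, ∑ y : CICorner m n μ a,
        Tc m n μ ⟨b, i⟩ x.1 * Ring.inverse (Acorner m n μ a) x y * Tc m n μ y.1 ⟨a, j⟩

/-- The Gauss block `E_{a,b}(u) = D'_a(u) ⬝ (boxed quasideterminant)`. -/
def Emat (a b : Fin (m + n)) : Matrix (Fin (μ a)) (Fin (μ b)) (Rc m n μ) :=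
  Dmat' m n μ a * quasE m n μ a b

/-- The Gauss block `F_{b,a}(u) = (boxed quasideterminant) ⬝ D'_a(u)`. -/
def Fmat (b a : Fin (m + n)) : Matrix (Fin (μ b)) (Fin (μ a)) (Rc m n μ) :=
  quasF m n μ b a * Dmat' m n μ a

/-- `D_{a;i,j}^{(r)}`. -/
def Dc (a : Fin (m + n)) (i j : Fin (μ a)) (r : ℕ) : Yc m n μ :=
  PowerSeries.coeff r (Dmat m n μ a i j)

/-- `D'_{a;i,j}^{(r)}`. -/
def D'c (a : Fin (m + n)) (i j : Fin (μ a)) (r : ℕ) : Yc m n μ :=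
  PowerSeries.coeff r (Dmat' m n μ a i j)

/-- `E_{a,b;i,j}^{(r)}`. -/
def Eabc (a b : Fin (m + n)) (i : Fin (μ a)) (j : Fin (μ b)) (r : ℕ) : Yc m n μ :=
  PowerSeries.coeff r (Emat m n μ a b i j)

/-- `F_{b,a;i,j}^{(r)}`. -/
def Fbac (b a : Fin (m + n)) (i : Fin (μ b)) (j : Fin (μ a)) (r : ℕ) : Yc m n μ :=
  PowerSeries.coeff r (Fmat m n μ b a i j)

/-- The block `a : Fin (m+n)` built from `a : ℕ` with `a + 1 < m + n`. -/
abbrev blk (a : ℕ) (h : a + 1 < m + n) : Fin (m + n) := ⟨a, Nat.lt_of_succ_lt h⟩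
abbrev blk' (a : ℕ) (h : a + 1 < m + n) : Fin (m + n) := ⟨a + 1, h⟩

/-- `E_{a;i,j}^{(r)} = E_{a,a+1;i,j}^{(r)}` (0-indexed block `a`). -/
def Ec (a : ℕ) (h : a + 1 < m + n) (i : Fin (μ (blk m n a h))) (j : Fin (μ (blk' m n a h)))
    (r : ℕ) : Yc m n μ :=
  Eabc m n μ (blk m n a h) (blk' m n a h) i j r

/-- `F_{a;i,j}^{(r)} = F_{a+1,a;i,j}^{(r)}` (0-indexed block `a`). -/
def Fc (a : ℕ) (h : a + 1 < m + n) (i : Fin (μ (blk' m n a h))) (j : Fin (μ (blk m n a h)))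
    (r : ℕ) : Yc m n μ :=
  Fbac m n μ (blk' m n a h) (blk m n a h) i j r

section AuxGeneral
variable {S : Type*} [Ring S]

lemma sum_range_restrict {ι κ : Type*} [Fintype ι] [Fintype κ] [DecidableEq ι]
    (g : κ → ι) (hg : Function.Injective g) (f : ι → S)
    (h0 : ∀ i, (∀ x, g x ≠ i) → f i = 0) :
    ∑ i, f i = ∑ x, f (g x) := by
  classical
  have h1 : ∑ x : κ, f (g x) = ∑ i ∈ Finset.univ.image g, f i :=
    (Finset.sum_image (fun x _ y _ h => hg h)).symm
  rw [h1]
  refine (Finset.sum_subset (Finset.subset_univ _) ?_).symm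
  intro i _ hi
  exact h0 i fun x hx => hi (Finset.mem_image.mpr ⟨x, Finset.mem_univ _, hx⟩)

lemma strictTriangular_pow {ι : Type*} [Fintype ι] [DecidableEq ι]
    (ν : ι → ℕ) (N : Matrix ι ι S) (h : ∀ x y, ¬ ν y < ν x → N x y = 0) :
    ∀ k x y, ν x < k → (N ^ k) x y = 0 := by
  intro k
  induction k with
  | zero => intro x y hx; omega
  | succ k ih =>
    intro x y hx
    rw [pow_succ', Matrix.mul_apply]
    refine Finset.sum_eq_zero fun z _ => ?_
    by_cases hz : ν z < ν x
    · rw [ih z y (by omega), mul_zero]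
    · rw [h x z hz, zero_mul]

lemma isUnit_unitriangular {ι : Type*} [Fintype ι] [DecidableEq ι]
    (ν : ι → ℕ) (M : Matrix ι ι S)
    (h : ∀ x y, ¬ ν y < ν x → M x y = (if x = y then 1 else 0)) (k : ℕ)
    (hk : ∀ x, ν x < k) :
    IsUnit M := by
  have hM : M = 1 + (M - 1) := by abel
  rw [hM]
  refine IsNilpotent.isUnit_one_add ⟨k, ?_⟩
  ext x y
  rw [strictTriangular_pow ν (M - 1) ?_ k x y (hk x)]
  · simp
  · intro x y hxy
    rw [Matrix.sub_apply, h x y hxy, Matrix.one_apply]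
    simp

def matPS (ι : Type*) [Fintype ι] [DecidableEq ι] (S : Type*) [Ring S] :
    Matrix ι ι (PowerSeries S) ≃+* PowerSeries (Matrix ι ι S) where
  toFun M := PowerSeries.mk fun k => Matrix.of fun i j => PowerSeries.coeff k (M i j)
  invFun f := Matrix.of fun i j => PowerSeries.mk fun k => PowerSeries.coeff k f i j
  left_inv M := by ext; simp
  right_inv f := by ext; simp
  map_add' M N := by ext; simp
  map_mul' M N := by
    apply PowerSeries.ext
    intro k
    ext i j
    simp only [PowerSeries.coeff_mk, Matrix.of_apply, PowerSeries.coeff_mul, Matrix.mul_apply,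
      map_sum, Matrix.sum_apply]
    rw [Finset.sum_comm]

lemma isUnit_matrix_powerSeries {ι : Type*} [Fintype ι] [DecidableEq ι] {S : Type*} [Ring S]
    (M : Matrix ι ι (PowerSeries S))
    (h : IsUnit (Matrix.of fun i j => PowerSeries.constantCoeff (M i j))) :
    IsUnit M := by
  have h2 : IsUnit (matPS ι S M) := by
    rw [PowerSeries.isUnit_iff_constantCoeff]
    convert h using 1
    ext i j
    simp [matPS, PowerSeries.constantCoeff_mk]
  have h3 := h2.map (matPS ι S).symm.toRingHom
  simpa using h3

lemma isUnit_submatrix {ι κ : Type*} [Fintype ι] [DecidableEq ι] [Fintype κ] [DecidableEq κ]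
    (g : κ → ι) (hg : Function.Injective g) (M : Matrix ι ι S) (hM : IsUnit M)
    (h1 : ∀ (x : κ) (y : ι), (∀ z, g z ≠ y) → M (g x) y = 0)
    (h2 : ∀ (x : ι) (y : κ), (∀ z, g z ≠ x) → M x (g y) = 0) :
    IsUnit (M.submatrix g g) := by
  obtain ⟨u, hu⟩ := hM
  have hMB : M * u.inv = 1 := by rw [← hu]; exact u.mul_inv
  have hBM : u.inv * M = 1 := by rw [← hu]; exact u.inv_mul
  have e1 : M.submatrix g g * u.inv.submatrix g g = 1 := by
    ext x y
    rw [Matrix.mul_apply]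
    simp only [Matrix.submatrix_apply]
    have hs : ∑ z : κ, M (g x) (g z) * u.inv (g z) (g y)
        = ∑ i : ι, M (g x) i * u.inv i (g y) :=
      (sum_range_restrict g hg (fun i => M (g x) i * u.inv i (g y))
        (fun i hi => by rw [h1 x i hi, zero_mul])).symm
    rw [hs, ← Matrix.mul_apply, hMB]
    simp [Matrix.one_apply, hg.eq_iff]
  have e2 : u.inv.submatrix g g * M.submatrix g g = 1 := by
    ext x y
    rw [Matrix.mul_apply]
    simp only [Matrix.submatrix_apply]
    have hs : ∑ z : κ, u.inv (g x) (g z) * M (g z) (g y)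
        = ∑ i : ι, u.inv (g x) i * M i (g y) :=
      (sum_range_restrict g hg (fun i => u.inv (g x) i * M i (g y))
        (fun i hi => by rw [h2 i y hi, mul_zero])).symm
    rw [hs, ← Matrix.mul_apply, hBM]
    simp [Matrix.one_apply, hg.eq_iff]
  exact ⟨⟨_, _, e1, e2⟩, rfl⟩

lemma double_sum_eq_mul {α β κ : Type*} [Fintype κ]
    (P : Matrix α κ S) (Q : Matrix κ κ S) (R : Matrix κ β S) (i : α) (j : β) :
    ∑ x : κ, ∑ y : κ, P i x * Q x y * R y j = (P * Q * R) i j := by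
  simp only [Matrix.mul_apply, Finset.sum_mul]
  rw [Finset.sum_comm]

end AuxGeneral
section AuxDomain

variable {S : Type*} [Ring S]

lemma sum_corner (a : Fin (m + n)) (φ : CIdx m n μ → S)
    (h0 : ∀ z : CIdx m n μ, (a : ℕ) ≤ (z.1 : ℕ) → φ z = 0) :
    ∑ z : CIdx m n μ, φ z = ∑ z : CICorner m n μ a, φ z.1 := by
  refine sum_range_restrict Subtype.val Subtype.val_injective φ (fun i hi => h0 i ?_)
  by_contra hlt
  push_neg at hlt
  exact hi ⟨i, hlt⟩ rfl

lemma sum_split_le (a : Fin (m + n)) (φ : CIdx m n μ → S)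
    (h0 : ∀ z : CIdx m n μ, (a : ℕ) < (z.1 : ℕ) → φ z = 0) :
    ∑ z : CIdx m n μ, φ z =
      (∑ z : CICorner m n μ a, φ z.1) + ∑ k : Fin (μ a), φ ⟨a, k⟩ := by
  classical
  have hg : Function.Injective
      (Sum.elim (Subtype.val : CICorner m n μ a → CIdx m n μ)
        (fun k : Fin (μ a) => (⟨a, k⟩ : CIdx m n μ))) := by
    rintro (x | x) (y | y) h <;> simp only [Sum.elim_inl, Sum.elim_inr] at h
    · exact congrArg Sum.inl (Subtype.ext h)
    · exfalso
      have h1 : ((x.1.1 : Fin (m + n)) : ℕ) = (a : ℕ) :=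
        congrArg (fun z : CIdx m n μ => (z.1 : ℕ)) h
      have h2 := x.2
      omega
    · exfalso
      have h1 : ((y.1.1 : Fin (m + n)) : ℕ) = (a : ℕ) :=
        (congrArg (fun z : CIdx m n μ => (z.1 : ℕ)) h).symm
      have h2 := y.2
      omega
    · exact congrArg Sum.inr (by simpa using h)
  rw [sum_range_restrict _ hg φ ?_]
  · rw [Fintype.sum_sum_type]; rfl
  · intro z hz
    apply h0
    by_contra hle
    push_neg at hle
    rcases lt_or_eq_of_le hle with h' | h'
    · exact hz (Sum.inl ⟨z, h'⟩) rfl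
    · obtain ⟨c, k⟩ := z
      have hc : c = a := Fin.ext h'
      subst hc
      exact hz (Sum.inr k) rfl

lemma ccT (x y : CIdx m n μ) :
    PowerSeries.constantCoeff (Tc m n μ x y) = if x = y then 1 else 0 := by
  have h1 : Tc m n μ x y = PowerSeries.mk fun r => tY (pC m n μ) x y r := rfl
  rw [h1, PowerSeries.constantCoeff_mk]
  have h2 : tY (pC m n μ) x y 0
      = RingQuot.mkAlgHom ℂ (YRel (pC m n μ)) (algebraMap ℂ _ (if x = y then 1 else 0)) := rfl
  rw [h2, AlgHom.commutes]
  by_cases h : x = y <;> simp [h]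

end AuxDomain
section AuxCorner

lemma sandwich {S : Type*} [Ring S] (f d e A : S) (hAdef : A = f * d * e)
    (hf : IsUnit f) (he : IsUnit e) (hA : IsUnit A) :
    d * e * Ring.inverse A * (f * d) = d := by
  have h1 : d * e = Ring.inverse f * A := by
    rw [hAdef, mul_assoc f d e, Ring.inverse_mul_cancel_left _ _ hf]
  have h2 : f * d = A * Ring.inverse e := by
    rw [hAdef, Ring.mul_inverse_cancel_right _ _ he]
  rw [h1, h2, mul_assoc (Ring.inverse f) A (Ring.inverse A),
    Ring.mul_inverse_cancel A hA, mul_one, ← mul_assoc, ← h1,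
    Ring.mul_inverse_cancel_right _ _ he]

lemma sandwich_full {S : Type*} [Ring S] {κ α β : Type*} [Fintype κ]
    (P : Matrix α κ S) (R : Matrix κ β S) (f d e A : Matrix κ κ S)
    [DecidableEq κ]
    (hAdef : A = f * d * e) (hf : IsUnit f) (he : IsUnit e) (hA : IsUnit A) :
    P * d * e * Ring.inverse A * (f * d * R) = P * d * R := by
  have hs : d * e * Ring.inverse A * (f * d) = d := sandwich f d e A hAdef hf he hA
  calc P * d * e * Ring.inverse A * (f * d * R)
      = P * (d * e * Ring.inverse A * (f * d)) * R := by
        simp only [Matrix.mul_assoc]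
    _ = P * d * R := by rw [hs]

variable {Fm Dm Em : Matrix (CIdx m n μ) (CIdx m n μ) (Rc m n μ)}

lemma expandL (hT : Tc m n μ = Fm * Dm * Em) (x y : CIdx m n μ) :
    Tc m n μ x y = ∑ z : CIdx m n μ, Fm x z * (Dm * Em) z y := by
  rw [hT, mul_assoc, Matrix.mul_apply]

lemma expandR (hT : Tc m n μ = Fm * Dm * Em) (x y : CIdx m n μ) :
    Tc m n μ x y = ∑ w : CIdx m n μ, (Fm * Dm) x w * Em w y := by
  rw [hT, Matrix.mul_apply]

lemma DE_corner_row (hD : ∀ x y : CIdx m n μ, x.1 ≠ y.1 → Dm x y = 0)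
    (a : Fin (m + n)) (z : CICorner m n μ a) (y : CIdx m n μ) :
    (Dm * Em) z.1 y = ∑ w : CICorner m n μ a, Dm z.1 w.1 * Em w.1 y := by
  rw [Matrix.mul_apply]
  refine sum_corner m n μ a _ (fun w hw => ?_)
  have hne : z.1.1 ≠ w.1 := by
    intro h
    have h2 := congrArg Fin.val h
    have h3 := z.2
    omega
  rw [hD _ _ hne, zero_mul]

lemma FD_corner_col (hD : ∀ x y : CIdx m n μ, x.1 ≠ y.1 → Dm x y = 0)
    (a : Fin (m + n)) (x : CIdx m n μ) (w : CICorner m n μ a) :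
    (Fm * Dm) x w.1 = ∑ z : CICorner m n μ a, Fm x z.1 * Dm z.1 w.1 := by
  rw [Matrix.mul_apply]
  refine sum_corner m n μ a _ (fun z hz => ?_)
  have hne : z.1 ≠ w.1.1 := by
    intro h
    have h2 := congrArg Fin.val h
    have h3 := w.2
    omega
  rw [hD _ _ hne, mul_zero]

lemma DE_blocka_row (hD : ∀ x y : CIdx m n μ, x.1 ≠ y.1 → Dm x y = 0)
    (a : Fin (m + n)) (i : Fin (μ a)) (y : CIdx m n μ) :
    (Dm * Em) ⟨a, i⟩ y = ∑ l : Fin (μ a), Dm ⟨a, i⟩ ⟨a, l⟩ * Em ⟨a, l⟩ y := by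
  rw [Matrix.mul_apply]
  rw [sum_split_le m n μ a _ (fun w hw => by
    have hne : ((⟨a, i⟩ : CIdx m n μ)).1 ≠ w.1 := by
      intro h; have h2 : (a : ℕ) = (w.1 : ℕ) := congrArg Fin.val h; omega
    rw [hD _ _ hne, zero_mul])]
  rw [Finset.sum_eq_zero (fun w _ => by
    have hne : ((⟨a, i⟩ : CIdx m n μ)).1 ≠ w.1.1 := by
      intro h; have h2 : (a : ℕ) = (w.1.1 : ℕ) := congrArg Fin.val h; have h3 := w.2; omega
    rw [hD _ _ hne, zero_mul]), zero_add]

lemma FD_blocka_col (hD : ∀ x y : CIdx m n μ, x.1 ≠ y.1 → Dm x y = 0)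
    (a : Fin (m + n)) (x : CIdx m n μ) (j : Fin (μ a)) :
    (Fm * Dm) x ⟨a, j⟩ = ∑ k : Fin (μ a), Fm x ⟨a, k⟩ * Dm ⟨a, k⟩ ⟨a, j⟩ := by
  rw [Matrix.mul_apply]
  rw [sum_split_le m n μ a _ (fun z hz => by
    have hne : z.1 ≠ ((⟨a, j⟩ : CIdx m n μ)).1 := by
      intro h; have h2 : (z.1 : ℕ) = (a : ℕ) := congrArg Fin.val h; omega
    rw [hD _ _ hne, mul_zero])]
  rw [Finset.sum_eq_zero (fun z _ => by
    have hne : z.1.1 ≠ ((⟨a, j⟩ : CIdx m n μ)).1 := by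
      intro h; have h2 : (z.1.1 : ℕ) = (a : ℕ) := congrArg Fin.val h; have h3 := z.2; omega
    rw [hD _ _ hne, mul_zero]), zero_add]

lemma T_row_corner (hD : ∀ x y : CIdx m n μ, x.1 ≠ y.1 → Dm x y = 0)
    (hFlower : ∀ x y : CIdx m n μ, (x.1 : ℕ) < (y.1 : ℕ) → Fm x y = 0)
    (hT : Tc m n μ = Fm * Dm * Em) (a : Fin (m + n)) {β : Type*} (q : β → CIdx m n μ) :
    (Tc m n μ).submatrix (Subtype.val : CICorner m n μ a → _) q =
      Fm.submatrix (Subtype.val : CICorner m n μ a → _) (Subtype.val : CICorner m n μ a → _) *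
        Dm.submatrix (Subtype.val : CICorner m n μ a → _) (Subtype.val : CICorner m n μ a → _) *
        Em.submatrix (Subtype.val : CICorner m n μ a → _) q := by
  ext x j : 1
  rw [Matrix.submatrix_apply, expandL m n μ hT]
  rw [sum_corner m n μ a _ (fun z hz => by
    rw [hFlower _ _ (lt_of_lt_of_le x.2 hz), zero_mul])]
  simp_rw [DE_corner_row m n μ hD a]
  simp only [Matrix.mul_apply, Matrix.submatrix_apply, Finset.mul_sum, Finset.sum_mul]
  rw [Finset.sum_comm]
  simp only [mul_assoc]

lemma T_col_corner (hD : ∀ x y : CIdx m n μ, x.1 ≠ y.1 → Dm x y = 0)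
    (hEupper : ∀ x y : CIdx m n μ, (y.1 : ℕ) < (x.1 : ℕ) → Em x y = 0)
    (hT : Tc m n μ = Fm * Dm * Em) (a : Fin (m + n)) {α : Type*} (p : α → CIdx m n μ) :
    (Tc m n μ).submatrix p (Subtype.val : CICorner m n μ a → _) =
      Fm.submatrix p (Subtype.val : CICorner m n μ a → _) *
        Dm.submatrix (Subtype.val : CICorner m n μ a → _) (Subtype.val : CICorner m n μ a → _) *
        Em.submatrix (Subtype.val : CICorner m n μ a → _) (Subtype.val : CICorner m n μ a → _) := by
  ext i y : 1
  rw [Matrix.submatrix_apply, expandR m n μ hT]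
  rw [sum_corner m n μ a _ (fun w hw => by
    rw [hEupper _ _ (lt_of_lt_of_le y.2 hw), mul_zero])]
  simp_rw [FD_corner_col m n μ hD a]
  simp only [Matrix.mul_apply, Matrix.submatrix_apply, Finset.sum_mul]

end AuxCorner
section AuxBlocks

variable {Fm Dm Em : Matrix (CIdx m n μ) (CIdx m n μ) (Rc m n μ)}

lemma Fdelta (hFdiag : ∀ x y : CIdx m n μ, x.1 = y.1 → Fm x y = if x = y then 1 else 0)
    (a : Fin (m + n)) (i k : Fin (μ a)) :
    Fm ⟨a, i⟩ ⟨a, k⟩ = if i = k then 1 else 0 := by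
  rw [hFdiag (⟨a, i⟩ : CIdx m n μ) (⟨a, k⟩ : CIdx m n μ) rfl]
  by_cases h : i = k
  · simp [h]
  · rw [if_neg (show ¬((⟨a, i⟩ : CIdx m n μ) = ⟨a, k⟩) from fun hc => h (sigma_mk_injective (β := fun c : Fin (m + n) => Fin (μ c)) hc)), if_neg h]

lemma Edelta (hEdiag : ∀ x y : CIdx m n μ, x.1 = y.1 → Em x y = if x = y then 1 else 0)
    (a : Fin (m + n)) (l j : Fin (μ a)) :
    Em ⟨a, l⟩ ⟨a, j⟩ = if l = j then 1 else 0 := by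
  rw [hEdiag (⟨a, l⟩ : CIdx m n μ) (⟨a, j⟩ : CIdx m n μ) rfl]
  by_cases h : l = j
  · simp [h]
  · rw [if_neg (show ¬((⟨a, l⟩ : CIdx m n μ) = ⟨a, j⟩) from fun hc => h (sigma_mk_injective (β := fun c : Fin (m + n) => Fin (μ c)) hc)), if_neg h]

lemma T_blockrow (hD : ∀ x y : CIdx m n μ, x.1 ≠ y.1 → Dm x y = 0)
    (hFlower : ∀ x y : CIdx m n μ, (x.1 : ℕ) < (y.1 : ℕ) → Fm x y = 0)
    (hFdiag : ∀ x y : CIdx m n μ, x.1 = y.1 → Fm x y = if x = y then 1 else 0)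
    (hT : Tc m n μ = Fm * Dm * Em) (a : Fin (m + n)) (i : Fin (μ a)) (y : CIdx m n μ) :
    Tc m n μ ⟨a, i⟩ y =
      (∑ z : CICorner m n μ a, Fm ⟨a, i⟩ z.1 *
        ∑ w : CICorner m n μ a, Dm z.1 w.1 * Em w.1 y)
      + ∑ l : Fin (μ a), Dm ⟨a, i⟩ ⟨a, l⟩ * Em ⟨a, l⟩ y := by
  rw [expandL m n μ hT]
  rw [sum_split_le m n μ a _ (fun z hz => by rw [hFlower _ _ hz, zero_mul])]
  refine congrArg₂ (· + ·) ?_ ?_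
  · exact Finset.sum_congr rfl fun z _ => by rw [DE_corner_row m n μ hD a]
  · simp_rw [Fdelta m n μ hFdiag a i, ite_mul, one_mul, zero_mul]
    rw [Finset.sum_ite_eq]
    simp only [Finset.mem_univ, if_true]
    exact DE_blocka_row m n μ hD a i y

lemma T_blockcol (hD : ∀ x y : CIdx m n μ, x.1 ≠ y.1 → Dm x y = 0)
    (hEupper : ∀ x y : CIdx m n μ, (y.1 : ℕ) < (x.1 : ℕ) → Em x y = 0)
    (hEdiag : ∀ x y : CIdx m n μ, x.1 = y.1 → Em x y = if x = y then 1 else 0)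
    (hT : Tc m n μ = Fm * Dm * Em) (a : Fin (m + n)) (x : CIdx m n μ) (j : Fin (μ a)) :
    Tc m n μ x ⟨a, j⟩ =
      (∑ w : CICorner m n μ a,
        (∑ z : CICorner m n μ a, Fm x z.1 * Dm z.1 w.1) * Em w.1 ⟨a, j⟩)
      + ∑ k : Fin (μ a), Fm x ⟨a, k⟩ * Dm ⟨a, k⟩ ⟨a, j⟩ := by
  rw [expandR m n μ hT]
  rw [sum_split_le m n μ a _ (fun w hw => by rw [hEupper _ _ hw, mul_zero])]
  refine congrArg₂ (· + ·) ?_ ?_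
  · exact Finset.sum_congr rfl fun w _ => by rw [FD_corner_col m n μ hD a]
  · simp_rw [Edelta m n μ hEdiag a _ j, mul_ite, mul_one, mul_zero]
    rw [Finset.sum_ite_eq']
    simp only [Finset.mem_univ, if_true]
    exact FD_blocka_col m n μ hD a x j

lemma T_aa_entry (hD : ∀ x y : CIdx m n μ, x.1 ≠ y.1 → Dm x y = 0)
    (hEupper : ∀ x y : CIdx m n μ, (y.1 : ℕ) < (x.1 : ℕ) → Em x y = 0)
    (hEdiag : ∀ x y : CIdx m n μ, x.1 = y.1 → Em x y = if x = y then 1 else 0)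
    (hFdiag : ∀ x y : CIdx m n μ, x.1 = y.1 → Fm x y = if x = y then 1 else 0)
    (hT : Tc m n μ = Fm * Dm * Em) (a : Fin (m + n)) (i j : Fin (μ a)) :
    Tc m n μ ⟨a, i⟩ ⟨a, j⟩ =
      ((Fm.submatrix (fun i : Fin (μ a) => (⟨a, i⟩ : CIdx m n μ))
          (Subtype.val : CICorner m n μ a → _) *
        Dm.submatrix (Subtype.val : CICorner m n μ a → _) (Subtype.val : CICorner m n μ a → _) *
        Em.submatrix (Subtype.val : CICorner m n μ a → _)
          (fun j : Fin (μ a) => (⟨a, j⟩ : CIdx m n μ)) :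
        Matrix (Fin (μ a)) (Fin (μ a)) (Rc m n μ))) i j
      + Dm ⟨a, i⟩ ⟨a, j⟩ := by
  rw [T_blockcol m n μ hD hEupper hEdiag hT a ⟨a, i⟩ j]
  refine congrArg₂ (· + ·) ?_ ?_
  · simp only [Matrix.mul_apply, Matrix.submatrix_apply, Finset.sum_mul]
  · simp_rw [Fdelta m n μ hFdiag a i, ite_mul, one_mul, zero_mul]
    rw [Finset.sum_ite_eq]
    simp only [Finset.mem_univ, if_true]

lemma T_ab_entry (hD : ∀ x y : CIdx m n μ, x.1 ≠ y.1 → Dm x y = 0)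
    (hFlower : ∀ x y : CIdx m n μ, (x.1 : ℕ) < (y.1 : ℕ) → Fm x y = 0)
    (hFdiag : ∀ x y : CIdx m n μ, x.1 = y.1 → Fm x y = if x = y then 1 else 0)
    (hT : Tc m n μ = Fm * Dm * Em) (a b : Fin (m + n)) (i : Fin (μ a)) (j : Fin (μ b)) :
    Tc m n μ ⟨a, i⟩ ⟨b, j⟩ =
      ((Fm.submatrix (fun i : Fin (μ a) => (⟨a, i⟩ : CIdx m n μ))
          (Subtype.val : CICorner m n μ a → _) *
        Dm.submatrix (Subtype.val : CICorner m n μ a → _) (Subtype.val : CICorner m n μ a → _) *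
        Em.submatrix (Subtype.val : CICorner m n μ a → _)
          (fun j : Fin (μ b) => (⟨b, j⟩ : CIdx m n μ)) :
        Matrix (Fin (μ a)) (Fin (μ b)) (Rc m n μ))) i j
      + ∑ l : Fin (μ a), Dm ⟨a, i⟩ ⟨a, l⟩ * Em ⟨a, l⟩ ⟨b, j⟩ := by
  rw [T_blockrow m n μ hD hFlower hFdiag hT a i ⟨b, j⟩]
  refine congrArg₂ (· + ·) ?_ rfl
  simp only [Matrix.mul_apply, Matrix.submatrix_apply, Finset.sum_mul, Finset.mul_sum]
  rw [Finset.sum_comm]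
  simp only [mul_assoc]

lemma T_ba_entry (hD : ∀ x y : CIdx m n μ, x.1 ≠ y.1 → Dm x y = 0)
    (hEupper : ∀ x y : CIdx m n μ, (y.1 : ℕ) < (x.1 : ℕ) → Em x y = 0)
    (hEdiag : ∀ x y : CIdx m n μ, x.1 = y.1 → Em x y = if x = y then 1 else 0)
    (hT : Tc m n μ = Fm * Dm * Em) (a b : Fin (m + n)) (i : Fin (μ b)) (j : Fin (μ a)) :
    Tc m n μ ⟨b, i⟩ ⟨a, j⟩ =
      ((Fm.submatrix (fun i : Fin (μ b) => (⟨b, i⟩ : CIdx m n μ))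
          (Subtype.val : CICorner m n μ a → _) *
        Dm.submatrix (Subtype.val : CICorner m n μ a → _) (Subtype.val : CICorner m n μ a → _) *
        Em.submatrix (Subtype.val : CICorner m n μ a → _)
          (fun j : Fin (μ a) => (⟨a, j⟩ : CIdx m n μ)) :
        Matrix (Fin (μ b)) (Fin (μ a)) (Rc m n μ))) i j
      + ∑ k : Fin (μ a), Fm ⟨b, i⟩ ⟨a, k⟩ * Dm ⟨a, k⟩ ⟨a, j⟩ := by
  rw [T_blockcol m n μ hD hEupper hEdiag hT a ⟨b, i⟩ j]
  refine congrArg₂ (· + ·) ?_ rfl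
  simp only [Matrix.mul_apply, Matrix.submatrix_apply, Finset.sum_mul]

end AuxBlocks
section AuxUnits

variable {Fm Dm Em : Matrix (CIdx m n μ) (CIdx m n μ) (Rc m n μ)}

lemma unit_fcorner (hFlower : ∀ x y : CIdx m n μ, (x.1 : ℕ) < (y.1 : ℕ) → Fm x y = 0)
    (hFdiag : ∀ x y : CIdx m n μ, x.1 = y.1 → Fm x y = if x = y then 1 else 0)
    (a : Fin (m + n)) :
    IsUnit (Fm.submatrix (Subtype.val : CICorner m n μ a → _) (Subtype.val : CICorner m n μ a → _)) := by
  refine isUnit_unitriangular (fun x : CICorner m n μ a => (x.1.1 : ℕ)) _ ?_ (a : ℕ)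
    (fun x => x.2)
  intro x y hxy
  rcases lt_or_eq_of_le (Nat.le_of_not_lt hxy) with h | h
  · rw [Matrix.submatrix_apply, hFlower _ _ h]
    rw [if_neg (fun hc => by rw [hc] at h; omega)]
  · have hfst : x.1.1 = y.1.1 := Fin.ext h
    rw [Matrix.submatrix_apply, hFdiag _ _ hfst]
    by_cases hxy2 : x = y
    · rw [if_pos (by rw [hxy2]), if_pos hxy2]
    · rw [if_neg (fun hc => hxy2 (Subtype.ext hc)), if_neg hxy2]

lemma unit_ecorner (hEupper : ∀ x y : CIdx m n μ, (y.1 : ℕ) < (x.1 : ℕ) → Em x y = 0)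
    (hEdiag : ∀ x y : CIdx m n μ, x.1 = y.1 → Em x y = if x = y then 1 else 0)
    (a : Fin (m + n)) :
    IsUnit (Em.submatrix (Subtype.val : CICorner m n μ a → _) (Subtype.val : CICorner m n μ a → _)) := by
  refine isUnit_unitriangular (fun x : CICorner m n μ a => (a : ℕ) - (x.1.1 : ℕ)) _ ?_
    ((a : ℕ) + 1) (fun x => by have := x.2; omega)
  intro x y hxy
  have hx := x.2; have hy := y.2
  rcases lt_or_eq_of_le (show (y.1.1 : ℕ) ≤ (x.1.1 : ℕ) by omega) with h | h
  · rw [Matrix.submatrix_apply, hEupper _ _ h]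
    rw [if_neg (fun hc => by rw [hc] at h; omega)]
  · have hfst : x.1.1 = y.1.1 := Fin.ext h.symm
    rw [Matrix.submatrix_apply, hEdiag _ _ hfst]
    by_cases hxy2 : x = y
    · rw [if_pos (by rw [hxy2]), if_pos hxy2]
    · rw [if_neg (fun hc => hxy2 (Subtype.ext hc)), if_neg hxy2]

lemma unit_Acorner (a : Fin (m + n)) : IsUnit (Acorner m n μ a) := by
  refine isUnit_matrix_powerSeries _ ?_
  have h1 : (Matrix.of fun x y : CICorner m n μ a =>
      PowerSeries.constantCoeff (Acorner m n μ a x y)) = 1 := by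
    ext x y
    show PowerSeries.constantCoeff (Tc m n μ x.1 y.1) = (1 : Matrix _ _ (Yc m n μ)) x y
    rw [ccT m n μ]
    rw [Matrix.one_apply]
    by_cases h : x = y
    · rw [if_pos (by rw [h]), if_pos h]
    · rw [if_neg (fun hc => h (Subtype.ext hc)), if_neg h]
  rw [h1]
  exact isUnit_one

lemma unit_Dblock (hD : ∀ x y : CIdx m n μ, x.1 ≠ y.1 → Dm x y = 0)
    (hEupper : ∀ x y : CIdx m n μ, (y.1 : ℕ) < (x.1 : ℕ) → Em x y = 0)
    (hEdiag : ∀ x y : CIdx m n μ, x.1 = y.1 → Em x y = if x = y then 1 else 0)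
    (hFlower : ∀ x y : CIdx m n μ, (x.1 : ℕ) < (y.1 : ℕ) → Fm x y = 0)
    (hFdiag : ∀ x y : CIdx m n μ, x.1 = y.1 → Fm x y = if x = y then 1 else 0)
    (hT : Tc m n μ = Fm * Dm * Em) (a : Fin (m + n)) :
    IsUnit (Dm.submatrix (fun i : Fin (μ a) => (⟨a, i⟩ : CIdx m n μ))
      (fun j : Fin (μ a) => (⟨a, j⟩ : CIdx m n μ))) := by
  classical
  set Φ : Matrix (CIdx m n μ) (CIdx m n μ) (Rc m n μ) →+*
      Matrix (CIdx m n μ) (CIdx m n μ) (Yc m n μ) :=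
    (PowerSeries.constantCoeff (R := Yc m n μ)).mapMatrix with hΦ
  have hT0 : Φ (Tc m n μ) = 1 := by
    ext x y
    show PowerSeries.constantCoeff (Tc m n μ x y) = (1 : Matrix _ _ (Yc m n μ)) x y
    rw [ccT m n μ, Matrix.one_apply]
  have hprod : (1 : Matrix (CIdx m n μ) (CIdx m n μ) (Yc m n μ)) = Φ Fm * Φ Dm * Φ Em := by
    rw [← hT0, hT, map_mul, map_mul]
  have hF0 : IsUnit (Φ Fm) := by
    refine isUnit_unitriangular (fun x : CIdx m n μ => (x.1 : ℕ)) _ ?_ (m + n)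
      (fun x => x.1.2)
    intro x y hxy
    rcases lt_or_eq_of_le (Nat.le_of_not_lt hxy) with h | h
    · show PowerSeries.constantCoeff (Fm x y) = _
      rw [hFlower _ _ h, map_zero, if_neg (fun hc => by rw [hc] at h; omega)]
    · show PowerSeries.constantCoeff (Fm x y) = _
      rw [hFdiag _ _ (Fin.ext h)]
      by_cases h2 : x = y
      · rw [if_pos h2, map_one, if_pos h2]
      · rw [if_neg h2, map_zero, if_neg h2]
  have hE0 : IsUnit (Φ Em) := by
    refine isUnit_unitriangular (fun x : CIdx m n μ => (m + n) - (x.1 : ℕ)) _ ?_ (m + n + 1)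
      (fun x => by omega)
    intro x y hxy
    have hx := x.1.2; have hy := y.1.2
    rcases lt_or_eq_of_le (show (y.1 : ℕ) ≤ (x.1 : ℕ) by omega) with h | h
    · show PowerSeries.constantCoeff (Em x y) = _
      rw [hEupper _ _ h, map_zero, if_neg (fun hc => by rw [hc] at h; omega)]
    · show PowerSeries.constantCoeff (Em x y) = _
      rw [hEdiag _ _ (Fin.ext h.symm)]
      by_cases h2 : x = y
      · rw [if_pos h2, map_one, if_pos h2]
      · rw [if_neg h2, map_zero, if_neg h2]
  have hD0 : IsUnit (Φ Dm) := by
    have e1 : Φ Dm = Ring.inverse (Φ Fm) * Ring.inverse (Φ Em) := by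
      calc Φ Dm = Ring.inverse (Φ Fm) * (Φ Fm * Φ Dm) :=
            (Ring.inverse_mul_cancel_left _ _ hF0).symm
        _ = Ring.inverse (Φ Fm) * (Φ Fm * Φ Dm * Φ Em * Ring.inverse (Φ Em)) := by
            rw [Ring.mul_inverse_cancel_right _ _ hE0]
        _ = Ring.inverse (Φ Fm) * Ring.inverse (Φ Em) := by
            rw [← hprod, one_mul]
    rw [e1]
    exact (isUnit_ringInverse.mpr hF0).mul (isUnit_ringInverse.mpr hE0)
  have hblock : IsUnit ((Φ Dm).submatrix (fun i : Fin (μ a) => (⟨a, i⟩ : CIdx m n μ))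
      (fun j : Fin (μ a) => (⟨a, j⟩ : CIdx m n μ))) := by
    refine isUnit_submatrix _ (fun i k h => sigma_mk_injective
      (β := fun c : Fin (m + n) => Fin (μ c)) h) _ hD0 ?_ ?_
    · intro x y hy
      show PowerSeries.constantCoeff (Dm ⟨a, x⟩ y) = 0
      rw [hD _ _ ?_, map_zero]
      intro hc
      obtain ⟨c, k⟩ := y
      have hc2 : a = c := hc
      subst hc2
      exact hy k rfl
    · intro x y hx
      show PowerSeries.constantCoeff (Dm x ⟨a, y⟩) = 0
      rw [hD _ _ ?_, map_zero]
      intro hc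
      obtain ⟨c, k⟩ := x
      have hc2 : c = a := hc
      subst hc2
      exact hx k rfl
  refine isUnit_matrix_powerSeries _ ?_
  exact hblock

end AuxUnits
section AuxClaims

variable {Fm Dm Em : Matrix (CIdx m n μ) (CIdx m n μ) (Rc m n μ)}

lemma claimD (hD : ∀ x y : CIdx m n μ, x.1 ≠ y.1 → Dm x y = 0)
    (hEupper : ∀ x y : CIdx m n μ, (y.1 : ℕ) < (x.1 : ℕ) → Em x y = 0)
    (hEdiag : ∀ x y : CIdx m n μ, x.1 = y.1 → Em x y = if x = y then 1 else 0)
    (hFlower : ∀ x y : CIdx m n μ, (x.1 : ℕ) < (y.1 : ℕ) → Fm x y = 0)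
    (hFdiag : ∀ x y : CIdx m n μ, x.1 = y.1 → Fm x y = if x = y then 1 else 0)
    (hT : Tc m n μ = Fm * Dm * Em) (a : Fin (m + n)) (i j : Fin (μ a)) :
    Dm ⟨a, i⟩ ⟨a, j⟩ = Dmat m n μ a i j := by
  have hAeq : Acorner m n μ a =
      Fm.submatrix (Subtype.val : CICorner m n μ a → _) (Subtype.val : CICorner m n μ a → _) *
        Dm.submatrix (Subtype.val : CICorner m n μ a → _) (Subtype.val : CICorner m n μ a → _) *
        Em.submatrix (Subtype.val : CICorner m n μ a → _) (Subtype.val : CICorner m n μ a → _) :=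
    T_row_corner m n μ hD hFlower hT a Subtype.val
  have hsum : (∑ x : CICorner m n μ a, ∑ y : CICorner m n μ a,
        Tc m n μ ⟨a, i⟩ x.1 * Ring.inverse (Acorner m n μ a) x y * Tc m n μ y.1 ⟨a, j⟩)
      = ((Tc m n μ).submatrix (fun i : Fin (μ a) => (⟨a, i⟩ : CIdx m n μ))
            (Subtype.val : CICorner m n μ a → _) *
          Ring.inverse (Acorner m n μ a) *
          (Tc m n μ).submatrix (Subtype.val : CICorner m n μ a → _)
            (fun j : Fin (μ a) => (⟨a, j⟩ : CIdx m n μ))) i j :=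
    double_sum_eq_mul ((Tc m n μ).submatrix (fun i : Fin (μ a) => (⟨a, i⟩ : CIdx m n μ))
        (Subtype.val : CICorner m n μ a → _))
      (Ring.inverse (Acorner m n μ a))
      ((Tc m n μ).submatrix (Subtype.val : CICorner m n μ a → _)
        (fun j : Fin (μ a) => (⟨a, j⟩ : CIdx m n μ))) i j
  simp only [Dmat]
  rw [hsum]
  rw [T_col_corner m n μ hD hEupper hT a (fun i : Fin (μ a) => (⟨a, i⟩ : CIdx m n μ))]
  rw [T_row_corner m n μ hD hFlower hT a (fun j : Fin (μ a) => (⟨a, j⟩ : CIdx m n μ))]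
  rw [sandwich_full _ _ _ _ _ _ hAeq (unit_fcorner m n μ hFlower hFdiag a)
    (unit_ecorner m n μ hEupper hEdiag a) (unit_Acorner m n μ a)]
  rw [T_aa_entry m n μ hD hEupper hEdiag hFdiag hT a i j]
  rw [add_sub_cancel_left]

lemma DmatEq (hD : ∀ x y : CIdx m n μ, x.1 ≠ y.1 → Dm x y = 0)
    (hEupper : ∀ x y : CIdx m n μ, (y.1 : ℕ) < (x.1 : ℕ) → Em x y = 0)
    (hEdiag : ∀ x y : CIdx m n μ, x.1 = y.1 → Em x y = if x = y then 1 else 0)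
    (hFlower : ∀ x y : CIdx m n μ, (x.1 : ℕ) < (y.1 : ℕ) → Fm x y = 0)
    (hFdiag : ∀ x y : CIdx m n μ, x.1 = y.1 → Fm x y = if x = y then 1 else 0)
    (hT : Tc m n μ = Fm * Dm * Em) (a : Fin (m + n)) :
    Dmat m n μ a = Dm.submatrix (fun i : Fin (μ a) => (⟨a, i⟩ : CIdx m n μ))
      (fun j : Fin (μ a) => (⟨a, j⟩ : CIdx m n μ)) := by
  funext i j
  exact (claimD m n μ hD hEupper hEdiag hFlower hFdiag hT a i j).symm

lemma claimE (hD : ∀ x y : CIdx m n μ, x.1 ≠ y.1 → Dm x y = 0)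
    (hEupper : ∀ x y : CIdx m n μ, (y.1 : ℕ) < (x.1 : ℕ) → Em x y = 0)
    (hEdiag : ∀ x y : CIdx m n μ, x.1 = y.1 → Em x y = if x = y then 1 else 0)
    (hFlower : ∀ x y : CIdx m n μ, (x.1 : ℕ) < (y.1 : ℕ) → Fm x y = 0)
    (hFdiag : ∀ x y : CIdx m n μ, x.1 = y.1 → Fm x y = if x = y then 1 else 0)
    (hT : Tc m n μ = Fm * Dm * Em) (a b : Fin (m + n)) (i : Fin (μ a)) (j : Fin (μ b)) :
    Em ⟨a, i⟩ ⟨b, j⟩ = Emat m n μ a b i j := by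
  have hAeq : Acorner m n μ a =
      Fm.submatrix (Subtype.val : CICorner m n μ a → _) (Subtype.val : CICorner m n μ a → _) *
        Dm.submatrix (Subtype.val : CICorner m n μ a → _) (Subtype.val : CICorner m n μ a → _) *
        Em.submatrix (Subtype.val : CICorner m n μ a → _) (Subtype.val : CICorner m n μ a → _) :=
    T_row_corner m n μ hD hFlower hT a Subtype.val
  have hquas : quasE m n μ a b =
      Dm.submatrix (fun i : Fin (μ a) => (⟨a, i⟩ : CIdx m n μ))
          (fun j : Fin (μ a) => (⟨a, j⟩ : CIdx m n μ)) *
        Em.submatrix (fun i : Fin (μ a) => (⟨a, i⟩ : CIdx m n μ))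
          (fun j : Fin (μ b) => (⟨b, j⟩ : CIdx m n μ)) := by
    ext i j
    have hsum : (∑ x : CICorner m n μ a, ∑ y : CICorner m n μ a,
          Tc m n μ ⟨a, i⟩ x.1 * Ring.inverse (Acorner m n μ a) x y * Tc m n μ y.1 ⟨b, j⟩)
        = ((Tc m n μ).submatrix (fun i : Fin (μ a) => (⟨a, i⟩ : CIdx m n μ))
              (Subtype.val : CICorner m n μ a → _) *
            Ring.inverse (Acorner m n μ a) *
            (Tc m n μ).submatrix (Subtype.val : CICorner m n μ a → _)
              (fun j : Fin (μ b) => (⟨b, j⟩ : CIdx m n μ))) i j :=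
      double_sum_eq_mul ((Tc m n μ).submatrix (fun i : Fin (μ a) => (⟨a, i⟩ : CIdx m n μ))
        (Subtype.val : CICorner m n μ a → _))
      (Ring.inverse (Acorner m n μ a))
      ((Tc m n μ).submatrix (Subtype.val : CICorner m n μ a → _)
        (fun j : Fin (μ b) => (⟨b, j⟩ : CIdx m n μ))) i j
    simp only [quasE]
    rw [hsum]
    rw [T_col_corner m n μ hD hEupper hT a (fun i : Fin (μ a) => (⟨a, i⟩ : CIdx m n μ))]
    rw [T_row_corner m n μ hD hFlower hT a (fun j : Fin (μ b) => (⟨b, j⟩ : CIdx m n μ))]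
    rw [sandwich_full _ _ _ _ _ _ hAeq (unit_fcorner m n μ hFlower hFdiag a)
      (unit_ecorner m n μ hEupper hEdiag a) (unit_Acorner m n μ a)]
    rw [T_ab_entry m n μ hD hFlower hFdiag hT a b i j]
    rw [add_sub_cancel_left]
    simp only [Matrix.mul_apply, Matrix.submatrix_apply]
  have hE : Emat m n μ a b =
      Em.submatrix (fun i : Fin (μ a) => (⟨a, i⟩ : CIdx m n μ))
        (fun j : Fin (μ b) => (⟨b, j⟩ : CIdx m n μ)) := by
    have h1 : Emat m n μ a b = Ring.inverse (Dmat m n μ a) * quasE m n μ a b := rfl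
    rw [h1, DmatEq m n μ hD hEupper hEdiag hFlower hFdiag hT a, hquas,
      ← Matrix.mul_assoc,
      Ring.inverse_mul_cancel _ (unit_Dblock m n μ hD hEupper hEdiag hFlower hFdiag hT a),
      Matrix.one_mul]
  rw [hE]
  rfl

lemma claimF (hD : ∀ x y : CIdx m n μ, x.1 ≠ y.1 → Dm x y = 0)
    (hEupper : ∀ x y : CIdx m n μ, (y.1 : ℕ) < (x.1 : ℕ) → Em x y = 0)
    (hEdiag : ∀ x y : CIdx m n μ, x.1 = y.1 → Em x y = if x = y then 1 else 0)
    (hFlower : ∀ x y : CIdx m n μ, (x.1 : ℕ) < (y.1 : ℕ) → Fm x y = 0)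
    (hFdiag : ∀ x y : CIdx m n μ, x.1 = y.1 → Fm x y = if x = y then 1 else 0)
    (hT : Tc m n μ = Fm * Dm * Em) (a b : Fin (m + n)) (i : Fin (μ b)) (j : Fin (μ a)) :
    Fm ⟨b, i⟩ ⟨a, j⟩ = Fmat m n μ b a i j := by
  have hAeq : Acorner m n μ a =
      Fm.submatrix (Subtype.val : CICorner m n μ a → _) (Subtype.val : CICorner m n μ a → _) *
        Dm.submatrix (Subtype.val : CICorner m n μ a → _) (Subtype.val : CICorner m n μ a → _) *
        Em.submatrix (Subtype.val : CICorner m n μ a → _) (Subtype.val : CICorner m n μ a → _) :=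
    T_row_corner m n μ hD hFlower hT a Subtype.val
  have hquas : quasF m n μ b a =
      Fm.submatrix (fun i : Fin (μ b) => (⟨b, i⟩ : CIdx m n μ))
          (fun j : Fin (μ a) => (⟨a, j⟩ : CIdx m n μ)) *
        Dm.submatrix (fun i : Fin (μ a) => (⟨a, i⟩ : CIdx m n μ))
          (fun j : Fin (μ a) => (⟨a, j⟩ : CIdx m n μ)) := by
    ext i j
    have hsum : (∑ x : CICorner m n μ a, ∑ y : CICorner m n μ a,
          Tc m n μ ⟨b, i⟩ x.1 * Ring.inverse (Acorner m n μ a) x y * Tc m n μ y.1 ⟨a, j⟩)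
        = ((Tc m n μ).submatrix (fun i : Fin (μ b) => (⟨b, i⟩ : CIdx m n μ))
              (Subtype.val : CICorner m n μ a → _) *
            Ring.inverse (Acorner m n μ a) *
            (Tc m n μ).submatrix (Subtype.val : CICorner m n μ a → _)
              (fun j : Fin (μ a) => (⟨a, j⟩ : CIdx m n μ))) i j :=
      double_sum_eq_mul ((Tc m n μ).submatrix (fun i : Fin (μ b) => (⟨b, i⟩ : CIdx m n μ))
        (Subtype.val : CICorner m n μ a → _))
      (Ring.inverse (Acorner m n μ a))
      ((Tc m n μ).submatrix (Subtype.val : CICorner m n μ a → _)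
        (fun j : Fin (μ a) => (⟨a, j⟩ : CIdx m n μ))) i j
    simp only [quasF]
    rw [hsum]
    rw [T_col_corner m n μ hD hEupper hT a (fun i : Fin (μ b) => (⟨b, i⟩ : CIdx m n μ))]
    rw [T_row_corner m n μ hD hFlower hT a (fun j : Fin (μ a) => (⟨a, j⟩ : CIdx m n μ))]
    rw [sandwich_full _ _ _ _ _ _ hAeq (unit_fcorner m n μ hFlower hFdiag a)
      (unit_ecorner m n μ hEupper hEdiag a) (unit_Acorner m n μ a)]
    rw [T_ba_entry m n μ hD hEupper hEdiag hT a b i j]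
    rw [add_sub_cancel_left]
    simp only [Matrix.mul_apply, Matrix.submatrix_apply]
  have hF : Fmat m n μ b a =
      Fm.submatrix (fun i : Fin (μ b) => (⟨b, i⟩ : CIdx m n μ))
        (fun j : Fin (μ a) => (⟨a, j⟩ : CIdx m n μ)) := by
    have h1 : Fmat m n μ b a = quasF m n μ b a * Ring.inverse (Dmat m n μ a) := rfl
    rw [h1, DmatEq m n μ hD hEupper hEdiag hFlower hFdiag hT a, hquas,
      Matrix.mul_assoc,
      Ring.mul_inverse_cancel _ (unit_Dblock m n μ hD hEupper hEdiag hFlower hFdiag hT a),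
      Matrix.mul_one]
  rw [hF]
  rfl

end AuxClaims
/- ### STATEMENT 2 -/

/-- **Proposition 3.1 (Gauss decomposition via quasideterminants).**
Suppose `T(u) = F(u) D(u) E(u)` where `D(u)` is block diagonal, `E(u)` is block upper
unitriangular and `F(u)` is block lower unitriangular (blocks of shape `μ`).  Then the
blocks of `D(u)`, `E(u)`, `F(u)` are given by the quasideterminant formulas:
`D_a(u)` is the quasideterminant of the leading `a × a` block array boxed at `(a,a)`,
`E_{a,b}(u) = D'_a(u) ⬝ (quasideterminant boxed at the `(a,b)` entry)`, and
`F_{b,a}(u) = (quasideterminant boxed at the `(b,a)` entry) ⬝ D'_a(u)`. -/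
theorem gauss_decomposition_quasideterminants
    (F D E : Matrix (CIdx m n μ) (CIdx m n μ) (Rc m n μ))
    (hD : ∀ x y : CIdx m n μ, x.1 ≠ y.1 → D x y = 0)
    (hEupper : ∀ x y : CIdx m n μ, (y.1 : ℕ) < (x.1 : ℕ) → E x y = 0)
    (hEdiag : ∀ x y : CIdx m n μ, x.1 = y.1 → E x y = if x = y then 1 else 0)
    (hFlower : ∀ x y : CIdx m n μ, (x.1 : ℕ) < (y.1 : ℕ) → F x y = 0)
    (hFdiag : ∀ x y : CIdx m n μ, x.1 = y.1 → F x y = if x = y then 1 else 0)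
    (hT : Tc m n μ = F * D * E) :
    (∀ (a : Fin (m + n)) (i j : Fin (μ a)), D ⟨a, i⟩ ⟨a, j⟩ = Dmat m n μ a i j) ∧
    (∀ (a b : Fin (m + n)), a < b → ∀ (i : Fin (μ a)) (j : Fin (μ b)),
      E ⟨a, i⟩ ⟨b, j⟩ = Emat m n μ a b i j) ∧
    (∀ (a b : Fin (m + n)), a < b → ∀ (i : Fin (μ b)) (j : Fin (μ a)),
      F ⟨b, i⟩ ⟨a, j⟩ = Fmat m n μ b a i j) := by
  exact ⟨fun a i j => claimD m n μ hD hEupper hEdiag hFlower hFdiag hT a i j,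
    fun a b _ i j => claimE m n μ hD hEupper hEdiag hFlower hFdiag hT a b i j,
    fun a b _ i j => claimF m n μ hD hEupper hEdiag hFlower hFdiag hT a b i j⟩

end
end

section
/- (1) For every k >= 0 and all 1 <= i, j <= M+N, psi_k(t_{ij}(u)) equals the quasideterminant t_{k+i,k+j}(u) - (t_{k+i,1}(u),...,t_{k+i,k}(u)) * ((t_{ab}(u))_{1<=a,b<=k})^{-1} * (t_{1,k+j}(u),...,t_{k,k+j}(u))^T, an identity in Y(gl_{k+M|N})((u^{-1})). (2) For all 1 <= i, j <= M+N, zeta_{M|N}(t_{ij}(u)) = t'_{M+N+1-i, M+N+1-j}(u), where t'_{ij}(u) are the entries of T(u)^{-1} in Y(gl_{N|M}). -/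
open scoped BigOperators

noncomputable section

variable {I : Type} [DecidableEq I]

/- ### The standard realization of `Y(gl_{M|N})` and the maps `ρ`, `ω`. -/

/-- The standard parity on `Fin (M+N)` (0-indexed): the first `M` indices are even and
the last `N` indices are odd. -/
def stdP (M N : ℕ) : Fin (M + N) → Bool := fun i => decide (M ≤ (i : ℕ))

/-- The super Yangian `Y(gl_{M|N})`. -/
abbrev Ystd (M N : ℕ) := Yangian (stdP M N)

/-- The matrix `T(u)` of `Y(gl_{M|N})`. -/
def Tstd (M N : ℕ) : Matrix (Fin (M + N)) (Fin (M + N)) (PowerSeries (Ystd M N)) :=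
  fun i j => tSer _ i j

/-- The matrix `T(-u)`: the coefficient of `u^{-r}` in its `(i,j)` entry is
`(-1)^r t_{ij}^{(r)}`. -/
def TstdNeg (M N : ℕ) : Matrix (Fin (M + N)) (Fin (M + N)) (PowerSeries (Ystd M N)) :=
  fun i j => PowerSeries.mk fun r => ((-1 : ℂ) ^ r) • tY (stdP M N) i j r

/-- `IsOmega f` says that `f(T(u)) = (T(-u))^{-1}`, i.e. the matrix obtained by applying
`f` entrywise to `T(u)` is a two-sided inverse of `T(-u)`. -/
def IsOmega (M N : ℕ) (f : Ystd M N →+* Ystd M N) : Prop :=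
  (Matrix.of fun i j => PowerSeries.map f (Tstd M N i j)) * TstdNeg M N = 1 ∧
    TstdNeg M N * (Matrix.of fun i j => PowerSeries.map f (Tstd M N i j)) = 1

/-- The order-reversing bijection `i ↦ M+N+1-i` (0-indexed: `i ↦ M+N-1-i`). -/
def revIdx (M N : ℕ) : Fin (M + N) → Fin (N + M) :=
  fun i => ⟨M + N - 1 - (i : ℕ), by have := i.isLt; omega⟩

/-- `IsRho g` says that `g(t_{ij}(u)) = t_{M+N+1-i,M+N+1-j}(-u)`, i.e.
`g(t_{ij}^{(r)}) = (-1)^r t_{M+N+1-i,M+N+1-j}^{(r)}`. -/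
def IsRho (M N : ℕ) (g : Ystd M N → Ystd N M) : Prop :=
  ∀ (i j : Fin (M + N)) (r : ℕ),
    g (tY (stdP M N) i j r) = ((-1 : ℂ) ^ r) • tY (stdP N M) (revIdx M N i) (revIdx M N j) r

/-- The shift embedding `Fin (M+N) → Fin (k+M+N)`, `i ↦ k + i`. -/
def shiftIdx (M N k : ℕ) : Fin (M + N) → Fin (k + M + N) :=
  fun i => ⟨k + (i : ℕ), by have := i.isLt; omega⟩

/-- `IsPhi φ` says that `φ(t_{ij}^{(r)}) = t_{k+i,k+j}^{(r)}` (the inclusion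
`Y(gl_{M|N}) → Y(gl_{k+M|N})`). -/
def IsPhi (M N k : ℕ) (φ : Ystd M N → Ystd (k + M) N) : Prop :=
  ∀ (i j : Fin (M + N)) (r : ℕ),
    φ (tY (stdP M N) i j r) = tY (stdP (k + M) N) (shiftIdx M N k i) (shiftIdx M N k j) r

/-- The embedding `Fin k → Fin (k+M+N)` onto the first `k` indices. -/
def embk (M N k : ℕ) : Fin k → Fin (k + M + N) :=
  fun x => ⟨(x : ℕ), by have := x.isLt; omega⟩

/-- The north-western `k × k` corner of `T(u)` in `Y(gl_{k+M|N})`. -/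
def cornerK (M N k : ℕ) : Matrix (Fin k) (Fin k) (PowerSeries (Ystd (k + M) N)) :=
  fun x y => tSer _ (embk M N k x) (embk M N k y)

section Helpers
open PowerSeries

variable {R S : Type*} [Ring R] [Ring S]

/-- The substitution `u ↦ -u` on power series over an arbitrary ring. -/
def negu (R : Type*) [Ring R] : PowerSeries R →+* PowerSeries R where
  toFun f := PowerSeries.mk fun r => (-1 : R) ^ r * PowerSeries.coeff r f
  map_one' := by
    ext r
    rcases r with _ | r <;> simp [PowerSeries.coeff_one]
  map_mul' f g := by
    ext r
    simp only [coeff_mk, PowerSeries.coeff_mul, Finset.mul_sum]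
    apply Finset.sum_congr rfl
    intro p hp
    rw [Finset.HasAntidiagonal.mem_antidiagonal] at hp
    rw [← hp, pow_add, mul_assoc, mul_assoc]
    congr 1
    rw [← mul_assoc, ((Commute.neg_one_left ((PowerSeries.coeff p.1) f)).pow_left p.2).eq,
      mul_assoc]
  map_zero' := by ext r; simp
  map_add' f g := by ext r; simp [mul_add]

@[simp] lemma negu_coeff (f : PowerSeries R) (r : ℕ) :
    coeff r (negu R f) = (-1 : R) ^ r * coeff r f :=
  show coeff r (PowerSeries.mk fun s => (-1 : R) ^ s * coeff s f) = _ from coeff_mk _ _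

lemma negu_map (g : R →+* S) (f : PowerSeries R) :
    negu S (PowerSeries.map g f) = PowerSeries.map g (negu R f) := by
  ext r
  simp [PowerSeries.coeff_map]

/-- Matrix of power series from power series of matrices, as a ring hom. -/
def toMatPS (n : Type*) (R : Type*) [Fintype n] [DecidableEq n] [Ring R] :
    PowerSeries (Matrix n n R) →+* Matrix n n (PowerSeries R) where
  toFun f := Matrix.of fun i j => PowerSeries.mk fun r => PowerSeries.coeff r f i j
  map_one' := by
    ext i j r
    by_cases h : i = j <;> by_cases h0 : r = 0 <;>
      simp [h, h0, Matrix.one_apply, PowerSeries.coeff_one,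
        apply_ite (fun M : Matrix n n R => M i j), apply_ite (coeff (R := R) r)]
  map_mul' f g := by
    ext i j r
    simp only [Matrix.of_apply, coeff_mk, PowerSeries.coeff_mul, Matrix.mul_apply,
      Matrix.sum_apply, map_sum]
    rw [Finset.sum_comm]
  map_zero' := by ext i j r; simp
  map_add' f g := by ext i j r; simp

lemma isUnit_matrix_ps {n : Type*} [Fintype n] [DecidableEq n]
    (M : Matrix n n (PowerSeries R))
    (h : ∀ i j, PowerSeries.constantCoeff (M i j) = if i = j then 1 else 0) :
    IsUnit M := by
  have hM : M = toMatPS n R (PowerSeries.mk fun r => Matrix.of fun i j =>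
      PowerSeries.coeff r (M i j)) := by
    ext i j r; simp [toMatPS]
  rw [hM]
  apply IsUnit.map
  rw [PowerSeries.isUnit_iff_constantCoeff]
  have : PowerSeries.constantCoeff (PowerSeries.mk fun r => Matrix.of fun i j =>
      PowerSeries.coeff r (M i j)) = 1 := by
    rw [constantCoeff_mk]
    ext i j
    simp only [Matrix.of_apply, coeff_zero_eq_constantCoeff, Matrix.one_apply]
    rw [h]
  rw [this]
  exact isUnit_one

lemma schur {n m α : Type*} [Fintype n] [Fintype m] [DecidableEq n] [DecidableEq m] [Ring α]
    (X S : Matrix (n ⊕ m) (n ⊕ m) α) (h1 : X * S = 1) (h2 : S * X = 1)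
    (hA : IsUnit X.toBlocks₁₁) :
    (X.toBlocks₂₂ - X.toBlocks₂₁ * Ring.inverse X.toBlocks₁₁ * X.toBlocks₁₂) * S.toBlocks₂₂ = 1 ∧
    S.toBlocks₂₂ * (X.toBlocks₂₂ - X.toBlocks₂₁ * Ring.inverse X.toBlocks₁₁ * X.toBlocks₁₂)
      = 1 := by
  set A := X.toBlocks₁₁ with hAdef
  set B := X.toBlocks₁₂
  set C := X.toBlocks₂₁
  set D := X.toBlocks₂₂
  set P := S.toBlocks₁₁
  set Q := S.toBlocks₁₂
  set Rm := S.toBlocks₂₁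
  set W := S.toBlocks₂₂
  have hX : Matrix.fromBlocks A B C D = X := Matrix.fromBlocks_toBlocks X
  have hS : Matrix.fromBlocks P Q Rm W = S := Matrix.fromBlocks_toBlocks S
  rw [← hX, ← hS, Matrix.fromBlocks_multiply, ← Matrix.fromBlocks_one] at h1 h2
  have e12 : A * Q + B * W = 0 := by
    have h := congrArg Matrix.toBlocks₁₂ h1
    rw [Matrix.toBlocks_fromBlocks₁₂, Matrix.toBlocks_fromBlocks₁₂] at h; exact h
  have e22 : C * Q + D * W = 1 := by
    have h := congrArg Matrix.toBlocks₂₂ h1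
    rw [Matrix.toBlocks_fromBlocks₂₂, Matrix.toBlocks_fromBlocks₂₂] at h; exact h
  have f21 : Rm * A + W * C = 0 := by
    have h := congrArg Matrix.toBlocks₂₁ h2
    rw [Matrix.toBlocks_fromBlocks₂₁, Matrix.toBlocks_fromBlocks₂₁] at h; exact h
  have f22 : Rm * B + W * D = 1 := by
    have h := congrArg Matrix.toBlocks₂₂ h2
    rw [Matrix.toBlocks_fromBlocks₂₂, Matrix.toBlocks_fromBlocks₂₂] at h; exact h
  have hQ : Q = -(Ring.inverse A * B * W) := by
    have h : Ring.inverse A * (A * Q + B * W) = Ring.inverse A * (0 : Matrix n m α) := by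
      rw [e12]
    simp only [Matrix.mul_add, Matrix.mul_zero, ← Matrix.mul_assoc] at h
    rw [Ring.inverse_mul_cancel _ hA, Matrix.one_mul] at h
    exact eq_neg_of_add_eq_zero_left h
  have hR : Rm = -(W * C * Ring.inverse A) := by
    have h : (Rm * A + W * C) * Ring.inverse A = (0 : Matrix m n α) * Ring.inverse A := by
      rw [f21]
    simp only [Matrix.add_mul, Matrix.zero_mul, Matrix.mul_assoc] at h
    rw [Ring.mul_inverse_cancel _ hA, Matrix.mul_one, ← Matrix.mul_assoc] at h
    exact eq_neg_of_add_eq_zero_left h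
  constructor
  · rw [← e22, hQ]
    simp only [Matrix.mul_neg, Matrix.sub_mul, Matrix.mul_assoc]
    abel
  · rw [← f22, hR]
    simp only [Matrix.neg_mul, Matrix.mul_sub, Matrix.mul_assoc]
    abel

end Helpers

section YangianHelpers

open PowerSeries

variable {I : Type} [DecidableEq I]

lemma tY_zero (p : I → Bool) (a b : I) : tY p a b 0 = if a = b then 1 else 0 := by
  unfold tY tF
  rw [AlgHom.commutes]
  split_ifs <;> simp

lemma neg_one_pow_mul (p : I → Bool) (r : ℕ) (x : Yangian p) :
    (-1 : Yangian p) ^ r * x = ((-1 : ℂ) ^ r) • x := by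
  have h : (-1 : Yangian p) = algebraMap ℂ _ (-1) := by simp
  rw [h, ← map_pow, ← Algebra.smul_def]

lemma negu_tSer (p : I → Bool) (a b : I) :
    negu _ (tSer p a b) = PowerSeries.mk fun r => ((-1 : ℂ) ^ r) • tY p a b r := by
  ext r
  rw [negu_coeff]
  show (-1 : Yangian p) ^ r * coeff r (PowerSeries.mk fun s => tY p a b s)
      = coeff r (PowerSeries.mk fun s => ((-1 : ℂ) ^ s) • tY p a b s)
  rw [coeff_mk, coeff_mk, neg_one_pow_mul]

lemma negu_negSer (p : I → Bool) (a b : I) :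
    negu _ (PowerSeries.mk fun r => ((-1 : ℂ) ^ r) • tY p a b r) = tSer p a b := by
  ext r
  rw [negu_coeff]
  show (-1 : Yangian p) ^ r * coeff r (PowerSeries.mk fun s => ((-1 : ℂ) ^ s) • tY p a b s)
      = coeff r (PowerSeries.mk fun s => tY p a b s)
  rw [coeff_mk, coeff_mk, mul_smul_comm, neg_one_pow_mul, smul_smul, ← mul_pow]
  norm_num

end YangianHelpers

/-- The identification `Fin k ⊕ Fin (M+N) ≃ Fin (k+M+N)` given by `embk` and `shiftIdx`. -/
def sumE (M N k : ℕ) : Fin k ⊕ Fin (M + N) ≃ Fin (k + M + N) where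
  toFun := Sum.elim (embk M N k) (shiftIdx M N k)
  invFun i := if h : (i : ℕ) < k then Sum.inl ⟨i, h⟩
    else Sum.inr ⟨(i : ℕ) - k, by have := i.isLt; omega⟩
  left_inv x := by
    rcases x with x | y
    · simp only [Sum.elim_inl, embk]
      exact dif_pos x.isLt
    · simp only [Sum.elim_inr, shiftIdx]
      refine (dif_neg (show ¬ (k + (y : ℕ) < k) by omega)).trans ?_
      congr 1
      apply Fin.ext
      simp
  right_inv i := by
    by_cases h : (i : ℕ) < k
    · simp only [dif_pos h, Sum.elim_inl, embk]
    · simp only [dif_neg h, Sum.elim_inr, shiftIdx]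
      apply Fin.ext
      have := i.isLt
      simp only []
      omega

/-- The order-reversing bijection as an `Equiv`. -/
def revE (M N : ℕ) : Fin (M + N) ≃ Fin (N + M) where
  toFun := revIdx M N
  invFun := revIdx N M
  left_inv i := by
    have := i.isLt
    apply Fin.ext
    simp only [revIdx]
    omega
  right_inv i := by
    have := i.isLt
    apply Fin.ext
    simp only [revIdx]
    omega

set_option maxHeartbeats 1000000 in
lemma part_one (M N k : ℕ) (φ : Ystd M N →ₐ[ℂ] Ystd (k + M) N) (hφ : IsPhi M N k ⇑φ)
    (ω₁ : Ystd M N ≃ₐ[ℂ] Ystd M N) (hω₁ : IsOmega M N ω₁.toAlgHom.toRingHom)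
    (ω₂ : Ystd (k + M) N ≃ₐ[ℂ] Ystd (k + M) N) (hω₂ : IsOmega (k + M) N ω₂.toAlgHom.toRingHom)
    (i j : Fin (M + N)) :
    PowerSeries.map (ω₂.toAlgHom.comp (φ.comp ω₁.toAlgHom)).toRingHom (tSer (stdP M N) i j) =
      Tstd (k + M) N (shiftIdx M N k i) (shiftIdx M N k j) -
        ∑ x : Fin k, ∑ y : Fin k,
          Tstd (k + M) N (shiftIdx M N k i) (embk M N k x) *
            Ring.inverse (cornerK M N k) x y *
            Tstd (k + M) N (embk M N k y) (shiftIdx M N k j) := by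
  set w1 := ω₁.toAlgHom.toRingHom with hw1
  set w2 := ω₂.toAlgHom.toRingHom with hw2
  set fφ := φ.toRingHom with hfφ
  set sh := shiftIdx M N k with hsh
  set ek := embk M N k with hek
  set Ψ : Matrix (Fin (M + N)) (Fin (M + N)) (PowerSeries (Ystd (k + M) N)) :=
    Matrix.of fun a b =>
      PowerSeries.map (ω₂.toAlgHom.comp (φ.comp ω₁.toAlgHom)).toRingHom (tSer (stdP M N) a b)
    with hΨdef
  set Sm : Matrix (Fin (k + M + N)) (Fin (k + M + N)) (PowerSeries (Ystd (k + M) N)) :=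
    Matrix.of fun a b => PowerSeries.map w2 (TstdNeg (k + M) N a b) with hSmdef
  -- Step 1 : T * Sm = 1 = Sm * T
  have hmS : (negu (Ystd (k + M) N)).mapMatrix
      (Matrix.of fun a b => PowerSeries.map w2 (Tstd (k + M) N a b)) = Sm := by
    refine Matrix.ext fun a b => ?_
    show negu _ (PowerSeries.map w2 (tSer _ a b)) = Sm a b
    rw [negu_map, negu_tSer]
    rfl
  have hmT : (negu (Ystd (k + M) N)).mapMatrix (TstdNeg (k + M) N) = Tstd (k + M) N := by
    refine Matrix.ext fun a b => ?_
    show negu _ (PowerSeries.mk fun r => ((-1 : ℂ) ^ r) • tY (stdP (k + M) N) a b r)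
        = tSer _ a b
    exact negu_negSer _ _ _
  have hSmX : Sm * Tstd (k + M) N = 1 := by
    have h := congrArg (negu (Ystd (k + M) N)).mapMatrix hω₂.1
    rwa [map_mul, map_one, hmS, hmT] at h
  have hXSm : Tstd (k + M) N * Sm = 1 := by
    have h := congrArg (negu (Ystd (k + M) N)).mapMatrix hω₂.2
    rwa [map_mul, map_one, hmT, hmS] at h
  -- Step 2 : Ψ * W = 1 = W * Ψ  where  W = Sm.submatrix sh sh
  have hmφ : (PowerSeries.map fφ).mapMatrix (TstdNeg M N) = (TstdNeg (k + M) N).submatrix sh sh := by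
    ext a b r
    simp only [RingHom.mapMatrix_apply, Matrix.map_apply, Matrix.submatrix_apply,
      PowerSeries.coeff_map, TstdNeg, PowerSeries.coeff_mk]
    show φ ((-1 : ℂ) ^ r • tY (stdP M N) a b r) = _
    rw [map_smul, hφ]
  have hΨentry : ∀ a b, PowerSeries.map w2 (PowerSeries.map fφ (PowerSeries.map w1
      (Tstd M N a b))) = Ψ a b := by
    intro a b
    ext r
    simp only [PowerSeries.coeff_map]
    rfl
  have hΨW : Ψ * Sm.submatrix sh sh = 1 := by
    have h1 := congrArg (PowerSeries.map fφ).mapMatrix hω₁.1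
    rw [map_mul, map_one, hmφ] at h1
    have h2 := congrArg (PowerSeries.map w2).mapMatrix h1
    rw [map_mul, map_one] at h2
    have e1 : (PowerSeries.map w2).mapMatrix ((PowerSeries.map fφ).mapMatrix
        (Matrix.of fun a b => PowerSeries.map w1 (Tstd M N a b))) = Ψ := by
      exact Matrix.ext fun a b => hΨentry a b
    have e2 : (PowerSeries.map w2).mapMatrix ((TstdNeg (k + M) N).submatrix sh sh)
        = Sm.submatrix sh sh := rfl
    rwa [e1, e2] at h2
  have hWΨ : Sm.submatrix sh sh * Ψ = 1 := by
    have h1 := congrArg (PowerSeries.map fφ).mapMatrix hω₁.2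
    rw [map_mul, map_one, hmφ] at h1
    have h2 := congrArg (PowerSeries.map w2).mapMatrix h1
    rw [map_mul, map_one] at h2
    have e1 : (PowerSeries.map w2).mapMatrix ((PowerSeries.map fφ).mapMatrix
        (Matrix.of fun a b => PowerSeries.map w1 (Tstd M N a b))) = Ψ := by
      exact Matrix.ext fun a b => hΨentry a b
    have e2 : (PowerSeries.map w2).mapMatrix ((TstdNeg (k + M) N).submatrix sh sh)
        = Sm.submatrix sh sh := rfl
    rwa [e1, e2] at h2
  -- Step 3 : the corner is invertible
  have hUnitA : IsUnit (cornerK M N k) := by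
    apply isUnit_matrix_ps
    intro x y
    have hc : PowerSeries.constantCoeff (tSer (stdP (k + M) N) (ek x) (ek y))
        = tY (stdP (k + M) N) (ek x) (ek y) 0 := rfl
    show PowerSeries.constantCoeff (tSer (stdP (k + M) N) (ek x) (ek y)) = _
    rw [hc, tY_zero]
    by_cases h : x = y
    · subst h; simp
    · rw [if_neg, if_neg h]
      intro hc2
      exact h (Fin.ext (by simpa [hek, embk, Fin.ext_iff] using hc2))
  -- Step 4 : Schur complement
  have hXe : (Tstd (k + M) N).submatrix (sumE M N k) (sumE M N k) *
      Sm.submatrix (sumE M N k) (sumE M N k) = 1 := by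
    rw [Matrix.submatrix_mul_equiv, hXSm, Matrix.submatrix_one _ (sumE M N k).injective]
  have hSe : Sm.submatrix (sumE M N k) (sumE M N k) *
      (Tstd (k + M) N).submatrix (sumE M N k) (sumE M N k) = 1 := by
    rw [Matrix.submatrix_mul_equiv, hSmX, Matrix.submatrix_one _ (sumE M N k).injective]
  have hA11 : ((Tstd (k + M) N).submatrix (sumE M N k) (sumE M N k)).toBlocks₁₁
      = cornerK M N k := rfl
  have hS22 : (Sm.submatrix (sumE M N k) (sumE M N k)).toBlocks₂₂ = Sm.submatrix sh sh := rfl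
  have hs := schur ((Tstd (k + M) N).submatrix (sumE M N k) (sumE M N k))
      (Sm.submatrix (sumE M N k) (sumE M N k)) hXe hSe (by rw [hA11]; exact hUnitA)
  rw [hA11, hS22] at hs
  set X' := (Tstd (k + M) N).submatrix (sumE M N k) (sumE M N k) with hX'
  set G := X'.toBlocks₂₂ - X'.toBlocks₂₁ * Ring.inverse (cornerK M N k) * X'.toBlocks₁₂ with hG
  -- Step 5 : Ψ = G
  have hΨG : Ψ = G := by
    calc Ψ = Ψ * (Sm.submatrix sh sh * G) := by rw [hs.2, Matrix.mul_one]
      _ = (Ψ * Sm.submatrix sh sh) * G := by rw [Matrix.mul_assoc]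
      _ = G := by rw [hΨW, Matrix.one_mul]
  -- Step 6 : take entries
  have hfin := congrFun (congrFun hΨG i) j
  have hGij : G i j = Tstd (k + M) N (sh i) (sh j) - ∑ x : Fin k, ∑ y : Fin k,
      Tstd (k + M) N (sh i) (ek x) * Ring.inverse (cornerK M N k) x y *
        Tstd (k + M) N (ek y) (sh j) := by
    rw [hG, Matrix.sub_apply]
    congr 1
    simp only [Matrix.mul_apply, Finset.sum_mul]
    rw [Finset.sum_comm]
    rfl
  calc PowerSeries.map (ω₂.toAlgHom.comp (φ.comp ω₁.toAlgHom)).toRingHom (tSer (stdP M N) i j)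
      = Ψ i j := rfl
    _ = G i j := hfin
    _ = _ := hGij

set_option maxHeartbeats 1000000 in
lemma part_two (M N : ℕ) (ρ : Ystd M N ≃ₐ[ℂ] Ystd N M) (hρ : IsRho M N ⇑ρ)
    (ω : Ystd M N ≃ₐ[ℂ] Ystd M N) (hω : IsOmega M N ω.toAlgHom.toRingHom)
    (i j : Fin (M + N)) :
    PowerSeries.map (ρ.toAlgHom.comp ω.toAlgHom).toRingHom (tSer (stdP M N) i j) =
      Ring.inverse (Tstd N M) (revIdx M N i) (revIdx M N j) := by
  set w := ω.toAlgHom.toRingHom with hw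
  set fρ := ρ.toAlgHom.toRingHom with hfρ
  set A2 : Matrix (Fin (M + N)) (Fin (M + N)) (PowerSeries (Ystd N M)) :=
    Matrix.of fun a b =>
      PowerSeries.map (ρ.toAlgHom.comp ω.toAlgHom).toRingHom (tSer (stdP M N) a b) with hA2
  set B2 : Matrix (Fin (M + N)) (Fin (M + N)) (PowerSeries (Ystd N M)) :=
    (Tstd N M).submatrix (revIdx M N) (revIdx M N) with hB2
  have hmρ : (PowerSeries.map fρ).mapMatrix (TstdNeg M N) = B2 := by
    ext a b r
    simp only [RingHom.mapMatrix_apply, Matrix.map_apply, Matrix.submatrix_apply,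
      PowerSeries.coeff_map, TstdNeg, PowerSeries.coeff_mk, hB2]
    show ρ ((-1 : ℂ) ^ r • tY (stdP M N) a b r) = _
    rw [map_smul, hρ, smul_smul, ← mul_pow]
    norm_num
    show _ = PowerSeries.coeff r (PowerSeries.mk fun s => tY (stdP N M) (revIdx M N a) (revIdx M N b) s)
    rw [PowerSeries.coeff_mk]
  have hmA : (PowerSeries.map fρ).mapMatrix
      (Matrix.of fun a b => PowerSeries.map w (Tstd M N a b)) = A2 := by
    ext a b r
    simp only [RingHom.mapMatrix_apply, Matrix.map_apply, PowerSeries.coeff_map, hA2,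
      Matrix.of_apply]
    rfl
  have hAB : A2 * B2 = 1 := by
    have h := congrArg (PowerSeries.map fρ).mapMatrix hω.1
    rwa [map_mul, map_one, hmρ, hmA] at h
  have hBA : B2 * A2 = 1 := by
    have h := congrArg (PowerSeries.map fρ).mapMatrix hω.2
    rwa [map_mul, map_one, hmρ, hmA] at h
  have hT : B2.submatrix ⇑(revE M N).symm ⇑(revE M N).symm = Tstd N M := by
    refine Matrix.ext fun a b => ?_
    show Tstd N M (revIdx M N ((revE M N).symm a)) (revIdx M N ((revE M N).symm b)) = _
    rw [show revIdx M N ((revE M N).symm a) = a from (revE M N).apply_symm_apply a,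
      show revIdx M N ((revE M N).symm b) = b from (revE M N).apply_symm_apply b]
  have h1 : Tstd N M * A2.submatrix ⇑(revE M N).symm ⇑(revE M N).symm = 1 := by
    rw [← hT, Matrix.submatrix_mul_equiv, hBA,
      Matrix.submatrix_one _ (revE M N).symm.injective]
  have h2 : A2.submatrix ⇑(revE M N).symm ⇑(revE M N).symm * Tstd N M = 1 := by
    rw [← hT, Matrix.submatrix_mul_equiv, hAB,
      Matrix.submatrix_one _ (revE M N).symm.injective]
  have hiT : IsUnit (Tstd N M) :=
    ⟨⟨Tstd N M, A2.submatrix ⇑(revE M N).symm ⇑(revE M N).symm, h1, h2⟩, rfl⟩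
  have hinv : Ring.inverse (Tstd N M) = A2.submatrix ⇑(revE M N).symm ⇑(revE M N).symm := by
    calc Ring.inverse (Tstd N M)
        = Ring.inverse (Tstd N M) * (Tstd N M * A2.submatrix ⇑(revE M N).symm ⇑(revE M N).symm) := by
          rw [h1, Matrix.mul_one]
      _ = (Ring.inverse (Tstd N M) * Tstd N M) * A2.submatrix ⇑(revE M N).symm ⇑(revE M N).symm := by
          rw [Matrix.mul_assoc]
      _ = A2.submatrix ⇑(revE M N).symm ⇑(revE M N).symm := by
          rw [Ring.inverse_mul_cancel _ hiT, Matrix.one_mul]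
  rw [hinv]
  show _ = A2 ((revE M N).symm (revIdx M N i)) ((revE M N).symm (revIdx M N j))
  rw [show (revE M N).symm (revIdx M N i) = i from (revE M N).symm_apply_apply i,
    show (revE M N).symm (revIdx M N j) = j from (revE M N).symm_apply_apply j]
  rfl


/- ### STATEMENT 6 -/

/-- **Lemma 4.1.**
(1) `ψ_k(t_{ij}(u))` equals the quasideterminant
`t_{k+i,k+j}(u) - (t_{k+i,1}(u),…,t_{k+i,k}(u)) ((t_{ab}(u))_{a,b ≤ k})^{-1}
(t_{1,k+j}(u),…,t_{k,k+j}(u))ᵀ` in `Y(gl_{k+M|N})[[u^{-1}]]`.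
(2) `ζ_{M|N}(t_{ij}(u)) = t'_{M+N+1-i,M+N+1-j}(u)`, where `t'_{ij}(u)` are the entries of
`T(u)^{-1}` in `Y(gl_{N|M})`. -/
theorem psi_quasideterminant_and_zeta_inverse (M N k : ℕ) :
    (∀ (φ : Ystd M N →ₐ[ℂ] Ystd (k + M) N), IsPhi M N k ⇑φ →
      ∀ (ω₁ : Ystd M N ≃ₐ[ℂ] Ystd M N), IsOmega M N ω₁.toAlgHom.toRingHom →
      ∀ (ω₂ : Ystd (k + M) N ≃ₐ[ℂ] Ystd (k + M) N),
        IsOmega (k + M) N ω₂.toAlgHom.toRingHom →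
      ∀ (i j : Fin (M + N)),
        PowerSeries.map (ω₂.toAlgHom.comp (φ.comp ω₁.toAlgHom)).toRingHom
            (tSer (stdP M N) i j) =
          Tstd (k + M) N (shiftIdx M N k i) (shiftIdx M N k j) -
            ∑ x : Fin k, ∑ y : Fin k,
              Tstd (k + M) N (shiftIdx M N k i) (embk M N k x) *
                Ring.inverse (cornerK M N k) x y *
                Tstd (k + M) N (embk M N k y) (shiftIdx M N k j)) ∧
    (∀ (ρ : Ystd M N ≃ₐ[ℂ] Ystd N M), IsRho M N ⇑ρ →
      ∀ (ω : Ystd M N ≃ₐ[ℂ] Ystd M N), IsOmega M N ω.toAlgHom.toRingHom →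
      ∀ (i j : Fin (M + N)),
        PowerSeries.map (ρ.toAlgHom.comp ω.toAlgHom).toRingHom (tSer (stdP M N) i j) =
          Ring.inverse (Tstd N M) (revIdx M N i) (revIdx M N j)) :=
  ⟨fun φ hφ ω₁ hω₁ ω₂ hω₂ i j => part_one M N k φ hφ ω₁ hω₁ ω₂ hω₂ i j,
   fun ρ hρ ω hω i j => part_two M N ρ hρ ω hω i j⟩

end
end

section
/- Inside Y(gl_{k+M|N}), the subalgebra Y(gl_k) generated by the elements {t_{ij}^{(r)} : 1 <= i, j <= k, r >= 1} and the subalgebra psi_k(Y(gl_{M|N})) supercommute with each other; that is, the supercommutator of any element of the first subalgebra with any element of the second is zero. -/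
open scoped BigOperators

noncomputable section

variable {I : Type} [DecidableEq I]

section Aux
open PowerSeries Finset

lemma tY_rel (p : I → Bool) (i j h l : I) (r s : ℕ) :
    tY p i j r * tY p h l s =
      sgn ((p i != p j) && (p h != p l)) • (tY p h l s * tY p i j r)
        + sgn (((p i && p j) != (p i && p h)) != (p j && p h)) •
          ∑ t ∈ Finset.range (min r s),
            (tY p h j t * tY p i l (r + s - 1 - t) - tY p h j (r + s - 1 - t) * tY p i l t) := by
  have hrel := RingQuot.mkAlgHom_rel ℂ (YRel.rel (p := p) i j h l r s)
  simpa only [tY, map_mul, map_add, map_smul, map_sum, map_sub] using hrel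

variable {A : Type} [Ring A] [Algebra ℂ A]

/-- commutator with `t` as a linear map -/
def dlt (t : A) : A →ₗ[ℂ] A where
  toFun x := t * x - x * t
  map_add' x y := by noncomm_ring
  map_smul' c x := by
    simp only [RingHom.id_apply, smul_sub, mul_smul_comm, smul_mul_assoc]

lemma dlt_apply (t x : A) : dlt t x = t * x - x * t := rfl

lemma dlt_mul (t x y : A) : dlt t (x * y) = dlt t x * y + x * dlt t y := by
  simp only [dlt_apply]; noncomm_ring

lemma dlt_one (t : A) : dlt t 1 = 0 := by simp [dlt_apply]

/-- coefficientwise extension of `dlt` to power series -/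
def dltP (t : A) : PowerSeries A →+ PowerSeries A where
  toFun F := PowerSeries.mk fun n => dlt t ((PowerSeries.coeff (R := A) n) F)
  map_zero' := by ext n; simp
  map_add' F G := by ext n; simp

lemma coeff_dltP (t : A) (F : PowerSeries A) (n : ℕ) :
    PowerSeries.coeff (R := A) n (dltP t F) = dlt t (PowerSeries.coeff (R := A) n F) := by
  simp [dltP]

lemma dltP_mul (t : A) (F G : PowerSeries A) :
    dltP t (F * G) = dltP t F * G + F * dltP t G := by
  ext n
  simp only [coeff_dltP, PowerSeries.coeff_mul, map_add, map_sum, dlt_mul,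
    Finset.sum_add_distrib]

lemma dltP_one (t : A) : dltP t 1 = 0 := by
  ext n
  simp only [coeff_dltP, PowerSeries.coeff_one, map_zero]
  split <;> simp [dlt_one, map_zero]


lemma filter_lt_range (r s : ℕ) :
    (Finset.range s).filter (· < r) = Finset.range (min r s) := by
  ext u; simp [Finset.mem_filter]; omega

lemma conv1 (x y : ℕ → A) (r s : ℕ) :
    (PowerSeries.coeff (R := A) s) (PowerSeries.X *
        (PowerSeries.mk (fun m => if m < r then ((-1 : ℂ) ^ m) • x m else 0) *
         PowerSeries.mk fun m => ((-1 : ℂ) ^ m) • y (m + r))) =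
      -(((-1 : ℂ) ^ s) • ∑ u ∈ Finset.range (min r s), x u * y (r + s - 1 - u)) := by
  rcases s with _ | s
  · simp
  · rw [PowerSeries.coeff_succ_X_mul, PowerSeries.coeff_mul,
      Finset.Nat.sum_antidiagonal_eq_sum_range_succ_mk]
    have hmin : min r (s + 1) = min r (s + 1) := rfl
    rw [← filter_lt_range r (s + 1), Finset.sum_filter]
    have step : ∀ u ∈ Finset.range (s + 1),
        (PowerSeries.coeff (R := A) u) (PowerSeries.mk fun m => if m < r then ((-1 : ℂ) ^ m) • x m else 0)
          * (PowerSeries.coeff (R := A) (s - u)) (PowerSeries.mk fun m => ((-1 : ℂ) ^ m) • y (m + r))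
        = -((-1 : ℂ) ^ (s + 1)) • (if u < r then x u * y (r + (s + 1) - 1 - u) else 0) := by
      intro u hu
      rw [Finset.mem_range] at hu
      rw [PowerSeries.coeff_mk, PowerSeries.coeff_mk]
      by_cases h : u < r
      · rw [if_pos h, if_pos h, smul_mul_assoc, mul_smul_comm, smul_smul, ← pow_add]
        have h1 : u + (s - u) = s := by omega
        have h2 : s - u + r = r + (s + 1) - 1 - u := by omega
        rw [h1, h2]
        have h3 : -((-1 : ℂ) ^ (s + 1)) = (-1 : ℂ) ^ s := by
          rw [pow_succ]; ring
        rw [h3]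
      · rw [if_neg h, if_neg h, zero_mul, smul_zero]
    rw [Finset.sum_congr rfl step, ← Finset.smul_sum, neg_smul]

lemma conv2 (x y : ℕ → A) (r s : ℕ) :
    (PowerSeries.coeff (R := A) s) (PowerSeries.X *
        (PowerSeries.mk (fun m => ((-1 : ℂ) ^ m) • x (m + r)) *
         PowerSeries.mk fun m => if m < r then ((-1 : ℂ) ^ m) • y m else 0)) =
      -(((-1 : ℂ) ^ s) • ∑ u ∈ Finset.range (min r s), x (r + s - 1 - u) * y u) := by
  rcases s with _ | s
  · simp
  · rw [PowerSeries.coeff_succ_X_mul, PowerSeries.coeff_mul,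
      ← Finset.Nat.sum_antidiagonal_swap,
      Finset.Nat.sum_antidiagonal_eq_sum_range_succ_mk]
    simp only [Prod.swap_prod_mk]
    rw [← filter_lt_range r (s + 1), Finset.sum_filter]
    have step : ∀ u ∈ Finset.range (s + 1),
        (PowerSeries.coeff (R := A) (s - u)) (PowerSeries.mk fun m => ((-1 : ℂ) ^ m) • x (m + r))
          * (PowerSeries.coeff (R := A) u) (PowerSeries.mk fun m => if m < r then ((-1 : ℂ) ^ m) • y m else 0)
        = -((-1 : ℂ) ^ (s + 1)) • (if u < r then x (r + (s + 1) - 1 - u) * y u else 0) := by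
      intro u hu
      rw [Finset.mem_range] at hu
      rw [PowerSeries.coeff_mk, PowerSeries.coeff_mk]
      by_cases h : u < r
      · rw [if_pos h, if_pos h, smul_mul_assoc, mul_smul_comm, smul_smul, ← pow_add]
        have h1 : s - u + u = s := by omega
        have h2 : s - u + r = r + (s + 1) - 1 - u := by omega
        rw [h1, h2]
        have h3 : -((-1 : ℂ) ^ (s + 1)) = (-1 : ℂ) ^ s := by
          rw [pow_succ]; ring
        rw [h3]
      · rw [if_neg h, if_neg h, mul_zero, smul_zero]
    rw [Finset.sum_congr rfl step, ← Finset.smul_sum, neg_smul]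


lemma coeff_csmul (c : ℂ) (F : PowerSeries A) (n : ℕ) :
    PowerSeries.coeff (R := A) n (c • F) = c • PowerSeries.coeff (R := A) n F := rfl

lemma rearr (x u v w : PowerSeries A) :
    x * (PowerSeries.X * (u * v)) * w = PowerSeries.X * (x * u * (v * w)) := by
  simp only [← mul_assoc]
  rw [← (PowerSeries.commute_X x).eq]

theorem key {I : Type} [DecidableEq I] [Fintype I] (p : I → Bool)
    (f : Yangian p →+* Yangian p)
    (S Tn : I → I → PowerSeries (Yangian p))
    (hS : ∀ a b, S a b = PowerSeries.map f (tSer p a b))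
    (hTn : ∀ a b, Tn a b = PowerSeries.mk fun m => ((-1 : ℂ) ^ m) • tY p a b m)
    (h1 : ∀ a c, ∑ h, S a h * Tn h c = if a = c then 1 else 0)
    (h2 : ∀ a c, ∑ h, Tn a h * S h c = if a = c then 1 else 0)
    (i j a b : I) (hi : p i = false) (hj : p j = false)
    (haj : a ≠ j) (hib : i ≠ b) (r s : ℕ) :
    tY p i j r * f (tY p a b s) = f (tY p a b s) * tY p i j r := by
  classical
  set t : Yangian p := tY p i j r with ht
  -- the commutator formula for even i, j
  have hD : ∀ (h l : I) (s' : ℕ), dlt t (tY p h l s') =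
      ∑ u ∈ Finset.range (min r s'),
        (tY p h j u * tY p i l (r + s' - 1 - u) - tY p h j (r + s' - 1 - u) * tY p i l u) := by
    intro h l s'
    have hrel := tY_rel p i j h l r s'
    rw [hi, hj] at hrel
    simp only [sgn, bne_self_eq_false, Bool.false_and, Bool.and_false, Bool.false_bne,
      if_false, one_smul, ite_smul, Bool.false_eq_true] at hrel
    rw [dlt_apply, hrel]
    exact add_sub_cancel_left _ _
  -- the low/high truncated series
  set Ln : I → PowerSeries (Yangian p) :=
    (fun h => PowerSeries.mk fun m => if m < r then ((-1 : ℂ) ^ m) • tY p h j m else 0) with hLn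
  set Hn : I → PowerSeries (Yangian p) :=
    (fun h => PowerSeries.mk fun m => ((-1 : ℂ) ^ m) • tY p h j (m + r)) with hHn
  set Ln' : I → PowerSeries (Yangian p) :=
    (fun l => PowerSeries.mk fun m => if m < r then ((-1 : ℂ) ^ m) • tY p i l m else 0) with hLn'
  set Hn' : I → PowerSeries (Yangian p) :=
    (fun l => PowerSeries.mk fun m => ((-1 : ℂ) ^ m) • tY p i l (m + r)) with hHn'
  -- Step B : dltP of T(-u) entries
  have hB : ∀ h l, dltP t (Tn h l) =
      -(PowerSeries.X * (Ln h * Hn' l)) + PowerSeries.X * (Hn h * Ln' l) := by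
    intro h l
    ext s'
    rw [map_add, map_neg, coeff_dltP, hTn, PowerSeries.coeff_mk, map_smul, hD,
      hLn, hHn, hLn', hHn', conv1, conv2]
    rw [Finset.sum_sub_distrib, smul_sub, neg_neg, sub_eq_add_neg]
  -- Step C : decomposition of T(-u) entries
  have hCj : ∀ h, Tn h j = Ln h + ((-1 : ℂ) ^ r) • (PowerSeries.X ^ r * Hn h) := by
    intro h
    ext m
    rw [hTn, map_add, PowerSeries.coeff_mk, hLn, hHn, PowerSeries.coeff_mk, coeff_csmul,
      PowerSeries.coeff_X_pow_mul']
    by_cases hm : m < r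
    · rw [if_pos hm, if_neg (by omega), smul_zero, add_zero]
    · rw [if_neg hm, if_pos (by omega), PowerSeries.coeff_mk, zero_add, smul_smul, ← pow_add]
      congr 2 <;> omega
  have hCi : ∀ l, Tn i l = Ln' l + ((-1 : ℂ) ^ r) • (PowerSeries.X ^ r * Hn' l) := by
    intro l
    ext m
    rw [hTn, map_add, PowerSeries.coeff_mk, hLn', hHn', PowerSeries.coeff_mk, coeff_csmul,
      PowerSeries.coeff_X_pow_mul']
    by_cases hm : m < r
    · rw [if_pos hm, if_neg (by omega), smul_zero, add_zero]
    · rw [if_neg hm, if_pos (by omega), PowerSeries.coeff_mk, zero_add, smul_smul, ← pow_add]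
      congr 2 <;> omega
  -- Step D : Leibniz applied to the inverse relation
  have h1' : ∀ c, ∑ h, (dltP t (S a h) * Tn h c + S a h * dltP t (Tn h c)) = 0 := by
    intro c
    have e0 : ∑ h, (dltP t (S a h) * Tn h c + S a h * dltP t (Tn h c))
        = dltP t (∑ h, S a h * Tn h c) := by
      rw [map_sum]
      exact Finset.sum_congr rfl fun h _ => (dltP_mul t _ _).symm
    rw [e0, h1 a c]
    split
    · exact dltP_one t
    · exact map_zero _
  have hDS : dltP t (S a b) = -∑ c, ∑ h, S a h * dltP t (Tn h c) * S c b := by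
    have e1 : dltP t (S a b) = ∑ h, dltP t (S a h) * (if h = b then 1 else 0) := by
      simp [mul_ite, mul_one, mul_zero]
    rw [e1]
    have e2 : ∀ h, (if h = b then (1 : PowerSeries (Yangian p)) else 0)
        = ∑ c, Tn h c * S c b := fun h => (h2 h b).symm
    calc
      ∑ h, dltP t (S a h) * (if h = b then 1 else 0)
          = ∑ h, ∑ c, dltP t (S a h) * (Tn h c * S c b) := by
            refine Finset.sum_congr rfl fun h _ => ?_
            rw [e2 h, Finset.mul_sum]
      _ = ∑ c, (∑ h, dltP t (S a h) * Tn h c) * S c b := by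
            rw [Finset.sum_comm]
            refine Finset.sum_congr rfl fun c _ => ?_
            rw [Finset.sum_mul]
            exact Finset.sum_congr rfl fun h _ => (mul_assoc _ _ _).symm
      _ = ∑ c, (-∑ h, S a h * dltP t (Tn h c)) * S c b := by
            refine Finset.sum_congr rfl fun c _ => ?_
            congr 1
            have := h1' c
            rw [Finset.sum_add_distrib] at this
            exact eq_neg_of_add_eq_zero_left this
      _ = -∑ c, ∑ h, S a h * dltP t (Tn h c) * S c b := by
            rw [← Finset.sum_neg_distrib]
            refine Finset.sum_congr rfl fun c _ => ?_
            rw [neg_mul (α := PowerSeries (Yangian p)), neg_inj, Finset.sum_mul]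
  -- abbreviations (plain sums)
  have hXr : ∀ F : PowerSeries (Yangian p), F * PowerSeries.X ^ r = PowerSeries.X ^ r * F :=
    fun F => ((PowerSeries.commute_X F).pow_right r).eq
  -- Step E : factorization
  have hfact : dltP t (S a b) =
      PowerSeries.X * ((∑ h, S a h * Ln h) * (∑ c, Hn' c * S c b))
        - PowerSeries.X * ((∑ h, S a h * Hn h) * (∑ c, Ln' c * S c b)) := by
    rw [hDS]
    have e3 : ∀ c h, S a h * dltP t (Tn h c) * S c b
        = -(PowerSeries.X * (S a h * Ln h * (Hn' c * S c b)))
          + PowerSeries.X * (S a h * Hn h * (Ln' c * S c b)) := by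
      intro c h
      rw [hB h c, mul_add, mul_neg (α := PowerSeries (Yangian p)), add_mul,
        neg_mul (α := PowerSeries (Yangian p)), rearr, rearr]
    calc
      -∑ c, ∑ h, S a h * dltP t (Tn h c) * S c b
          = -∑ c, ∑ h, (-(PowerSeries.X * (S a h * Ln h * (Hn' c * S c b)))
              + PowerSeries.X * (S a h * Hn h * (Ln' c * S c b))) := by
            congr 1
            exact Finset.sum_congr rfl fun c _ => Finset.sum_congr rfl fun h _ => e3 c h
      _ = -∑ c, (-(PowerSeries.X * ((∑ h, S a h * Ln h) * (Hn' c * S c b)))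
              + PowerSeries.X * ((∑ h, S a h * Hn h) * (Ln' c * S c b))) := by
            congr 1
            refine Finset.sum_congr rfl fun c _ => ?_
            rw [Finset.sum_add_distrib, Finset.sum_neg_distrib, ← Finset.mul_sum,
              ← Finset.sum_mul, ← Finset.mul_sum, ← Finset.sum_mul]
      _ = -(-(PowerSeries.X * ((∑ h, S a h * Ln h) * (∑ c, Hn' c * S c b)))
              + PowerSeries.X * ((∑ h, S a h * Hn h) * (∑ c, Ln' c * S c b))) := by
            rw [Finset.sum_add_distrib, Finset.sum_neg_distrib, ← Finset.mul_sum,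
              ← Finset.mul_sum, ← Finset.mul_sum, ← Finset.mul_sum]
      _ = _ := by rw [neg_add, neg_neg, ← sub_eq_add_neg]
  -- Step F : the inverse relations kill the two blocks
  have hP : (∑ h, S a h * Ln h)
      = -(((-1 : ℂ) ^ r) • (PowerSeries.X ^ r * ∑ h, S a h * Hn h)) := by
    have h0 := h1 a j
    rw [if_neg haj] at h0
    have e : ∀ h, S a h * Tn h j
        = S a h * Ln h + ((-1 : ℂ) ^ r) • (PowerSeries.X ^ r * (S a h * Hn h)) := by
      intro h
      rw [hCj h, mul_add, mul_smul_comm, ← mul_assoc, hXr (S a h), mul_assoc]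
    rw [Finset.sum_congr rfl fun h _ => e h, Finset.sum_add_distrib,
      ← Finset.smul_sum, ← Finset.mul_sum] at h0
    exact eq_neg_of_add_eq_zero_left h0
  have hQ : (∑ c, Ln' c * S c b)
      = -(((-1 : ℂ) ^ r) • (PowerSeries.X ^ r * ∑ c, Hn' c * S c b)) := by
    have h0 := h2 i b
    rw [if_neg hib] at h0
    have e : ∀ c, Tn i c * S c b
        = Ln' c * S c b + ((-1 : ℂ) ^ r) • (PowerSeries.X ^ r * (Hn' c * S c b)) := by
      intro c
      rw [hCi c, add_mul, smul_mul_assoc, mul_assoc]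
    rw [Finset.sum_congr rfl fun c _ => e c, Finset.sum_add_distrib,
      ← Finset.smul_sum, ← Finset.mul_sum] at h0
    exact eq_neg_of_add_eq_zero_left h0
  -- Step G : everything cancels
  have hzero : dltP t (S a b) = 0 := by
    rw [hfact, hP, hQ]
    have e1 : -(((-1 : ℂ) ^ r) • (PowerSeries.X ^ r * ∑ h, S a h * Hn h)) * (∑ c, Hn' c * S c b)
        = -(((-1 : ℂ) ^ r) • (PowerSeries.X ^ r * ((∑ h, S a h * Hn h) * ∑ c, Hn' c * S c b))) := by
      rw [neg_mul (α := PowerSeries (Yangian p)), smul_mul_assoc, mul_assoc]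
    have e2 : (∑ h, S a h * Hn h) * -(((-1 : ℂ) ^ r) • (PowerSeries.X ^ r * ∑ c, Hn' c * S c b))
        = -(((-1 : ℂ) ^ r) • (PowerSeries.X ^ r * ((∑ h, S a h * Hn h) * ∑ c, Hn' c * S c b))) := by
      rw [mul_neg (α := PowerSeries (Yangian p)), mul_smul_comm, ← mul_assoc,
        hXr (∑ h, S a h * Hn h), mul_assoc]
    rw [e1, e2, sub_self]
  -- extract the coefficient
  have hc := congrArg (PowerSeries.coeff (R := Yangian p) s) hzero
  rw [coeff_dltP, map_zero, hS a b, PowerSeries.coeff_map] at hc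
  have hcoeff : (PowerSeries.coeff (R := Yangian p) s) (tSer p a b) = tY p a b s :=
    PowerSeries.coeff_mk _ _
  rw [hcoeff] at hc
  exact sub_eq_zero.mp hc

lemma yangian_adjoin_top {I : Type} [DecidableEq I] (p : I → Bool) :
    Algebra.adjoin ℂ (Set.range fun g : I × I × ℕ => tY p g.1 g.2.1 (g.2.2 + 1)) = ⊤ := by
  have he : (fun g : I × I × ℕ => tY p g.1 g.2.1 (g.2.2 + 1))
      = fun g => RingQuot.mkAlgHom ℂ (YRel p) (FreeAlgebra.ι ℂ g) := rfl
  have h2 : Set.range (fun g : I × I × ℕ => RingQuot.mkAlgHom ℂ (YRel p) (FreeAlgebra.ι ℂ g))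
      = ⇑(RingQuot.mkAlgHom ℂ (YRel p)) '' Set.range (FreeAlgebra.ι ℂ) := by
    rw [← Set.range_comp]; rfl
  rw [he, h2, ← AlgHom.map_adjoin, FreeAlgebra.adjoin_range_ι, Algebra.map_top]
  exact (AlgHom.range_eq_top _).mpr (RingQuot.mkAlgHom_surjective ℂ _)

end Aux
/- ### STATEMENT 7 -/

/-- **Lemma 4.3.** Inside `Y(gl_{k+M|N})`, the subalgebra `Y(gl_k)` generated by the
elements `t_{ij}^{(r)}` with `i, j ≤ k`, `r ≥ 1`, and the subalgebra
`ψ_k(Y(gl_{M|N}))` supercommute with each other.  (All elements of `Y(gl_k)` are even,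
so the supercommutator of `x` and `y` is `xy - yx`.) -/
theorem yangian_glk_commutes_with_psi_image (M N k : ℕ)
    (φ : Ystd M N →ₐ[ℂ] Ystd (k + M) N) (hφ : IsPhi M N k ⇑φ)
    (ω₁ : Ystd M N ≃ₐ[ℂ] Ystd M N) (hω₁ : IsOmega M N ω₁.toAlgHom.toRingHom)
    (ω₂ : Ystd (k + M) N ≃ₐ[ℂ] Ystd (k + M) N)
    (hω₂ : IsOmega (k + M) N ω₂.toAlgHom.toRingHom) :
    ∀ x ∈ Algebra.adjoin ℂ
        {z : Ystd (k + M) N | ∃ (i j : Fin (k + M + N)) (r : ℕ),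
          (i : ℕ) < k ∧ (j : ℕ) < k ∧ z = tY (stdP (k + M) N) i j (r + 1)},
      ∀ y ∈ (ω₂.toAlgHom.comp (φ.comp ω₁.toAlgHom)).range,
        x * y - y * x = 0 := by
  intro x hx y hy
  have hkey : ∀ (i j : Fin (k + M + N)) (r : ℕ), (i : ℕ) < k → (j : ℕ) < k →
      ∀ (a b : Fin (k + M + N)) (s : ℕ), k ≤ (a : ℕ) → k ≤ (b : ℕ) →
      tY (stdP (k + M) N) i j r * ω₂ (tY (stdP (k + M) N) a b s)
        = ω₂ (tY (stdP (k + M) N) a b s) * tY (stdP (k + M) N) i j r := by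
    intro i j r hik hjk a b s hak hbk
    refine key (stdP (k + M) N) ω₂.toAlgHom.toRingHom
      (fun a b => PowerSeries.map ω₂.toAlgHom.toRingHom (tSer (stdP (k + M) N) a b))
      (fun a b => PowerSeries.mk fun m => ((-1 : ℂ) ^ m) • tY (stdP (k + M) N) a b m)
      (fun _ _ => rfl) (fun _ _ => rfl) ?_ ?_ i j a b ?_ ?_ ?_ ?_ r s
    · intro a' c'
      have hmat := congrArg (fun m => m a' c') hω₂.1
      simpa [Matrix.mul_apply, Matrix.one_apply, Tstd, TstdNeg] using hmat
    · intro a' c'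
      have hmat := congrArg (fun m => m a' c') hω₂.2
      simpa [Matrix.mul_apply, Matrix.one_apply, Tstd, TstdNeg] using hmat
    · simp only [stdP, decide_eq_false_iff_not]; omega
    · simp only [stdP, decide_eq_false_iff_not]; omega
    · intro hh; rw [hh] at hak; omega
    · intro hh; rw [← hh] at hbk; omega
  set G₂ : Set (Ystd (k + M) N) := {z | ∃ (a b : Fin (k + M + N)) (s : ℕ),
      k ≤ (a : ℕ) ∧ k ≤ (b : ℕ) ∧ z = ω₂ (tY (stdP (k + M) N) a b s)} with hG₂
  have hxc : ∀ z ∈ G₂, z * x = x * z := by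
    have hle : Algebra.adjoin ℂ
        {z : Ystd (k + M) N | ∃ (i j : Fin (k + M + N)) (r : ℕ),
          (i : ℕ) < k ∧ (j : ℕ) < k ∧ z = tY (stdP (k + M) N) i j (r + 1)}
        ≤ Subalgebra.centralizer ℂ G₂ := by
      apply Algebra.adjoin_le
      rintro z ⟨i, j, r, hik, hjk, rfl⟩
      rw [SetLike.mem_coe, Subalgebra.mem_centralizer_iff]
      rintro g ⟨a, b, s, hak, hbk, rfl⟩
      exact (hkey i j (r + 1) hik hjk a b s hak hbk).symm
    exact fun z hz => (hle hx) z hz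
  have hy2 : y ∈ Algebra.adjoin ℂ G₂ := by
    obtain ⟨w, rfl⟩ := hy
    have htop : ω₁ w ∈ Algebra.adjoin ℂ
        (Set.range fun gg : (Fin (M + N)) × (Fin (M + N)) × ℕ =>
          tY (stdP M N) gg.1 gg.2.1 (gg.2.2 + 1)) := by
      rw [yangian_adjoin_top]; trivial
    have hmem : (ω₂.toAlgHom.comp φ) (ω₁ w) ∈
        (Algebra.adjoin ℂ
          (Set.range fun gg : (Fin (M + N)) × (Fin (M + N)) × ℕ =>
            tY (stdP M N) gg.1 gg.2.1 (gg.2.2 + 1))).map (ω₂.toAlgHom.comp φ) :=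
      Subalgebra.mem_map.mpr ⟨_, htop, rfl⟩
    rw [AlgHom.map_adjoin] at hmem
    have hfin : (ω₂.toAlgHom.comp φ) (ω₁ w) ∈ Algebra.adjoin ℂ G₂ := by
      refine Algebra.adjoin_mono ?_ hmem
      rintro z ⟨zz, ⟨gg, rfl⟩, rfl⟩
      refine ⟨shiftIdx M N k gg.1, shiftIdx M N k gg.2.1, gg.2.2 + 1, ?_, ?_, ?_⟩
      · simp [shiftIdx]
      · simp [shiftIdx]
      · simp only [AlgHom.comp_apply]
        rw [hφ]
        rfl
    exact hfin
  have hyz : y ∈ Subalgebra.centralizer ℂ ({x} : Set (Ystd (k + M) N)) := by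
    refine Algebra.adjoin_le ?_ hy2
    intro g hg2
    rw [SetLike.mem_coe, Subalgebra.mem_centralizer_iff]
    rintro z hz
    rw [Set.mem_singleton_iff] at hz
    subst hz
    exact (hxc g hg2).symm
  have hfin : x * y = y * x := hyz x rfl
  rw [hfin, sub_self]

end
end

section
/- For all admissible a, i, j, the swap map zeta_{M|N}: Y(gl_{M|N}) -> Y(gl_{N|M}) satisfies: zeta_{M|N}(D_{a;i,j}(u)) = D'_{m+n+1-a; mu_a+1-i, mu_a+1-j}(u), zeta_{M|N}(E_{a;i,j}(u)) = -F_{m+n-a; mu_a+1-i, mu_{a+1}+1-j}(u), and zeta_{M|N}(F_{a;i,j}(u)) = -E_{m+n-a; mu_{a+1}+1-i, mu_a+1-j}(u), where the series on the left are the Gauss-decomposition series in Y(gl_{M|N}) associated to mu and the series on the right are the Gauss-decomposition series in Y(gl_{N|M}) associated to the reversed composition mu^r = (mu_{m+n},...,mu_{m+1} | mu_m,...,mu_1). -/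
open scoped BigOperators

noncomputable section

variable {I : Type} [DecidableEq I]

/- ### Composition (block) setup.
`μ = (μ_0, …, μ_{m-1} | μ_m, …, μ_{m+n-1})` is a composition of `(M|N)`: the first `m`
blocks are even and the last `n` blocks are odd.  The super Yangian `Y(gl_{M|N})` is
realized on the index set `Σ a, Fin (μ a)` (a block index together with an entry index),
with the parity of an index determined by its block. -/

variable (m n : ℕ) (μ : Fin (m + n) → ℕ)

/- ### STATEMENT 8 -/

/-- The matrix `T(-u)` in the block realization. -/
def TcNeg : Matrix (CIdx m n μ) (CIdx m n μ) (Rc m n μ) :=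
  fun i j => PowerSeries.mk fun r => ((-1 : ℂ) ^ r) • tY (pC m n μ) i j r

/-- `IsOmegaC f` says that `f(T(u)) = (T(-u))^{-1}`. -/
def IsOmegaC (f : Yc m n μ →+* Yc m n μ) : Prop :=
  (Matrix.of fun i j => PowerSeries.map f (Tc m n μ i j)) * TcNeg m n μ = 1 ∧
    TcNeg m n μ * (Matrix.of fun i j => PowerSeries.map f (Tc m n μ i j)) = 1

variable (μr : Fin (n + m) → ℕ)

/-- `σ` is the index-reversing bijection (reversing both blocks and entries). -/
def IsRevIdx (σ : CIdx m n μ → CIdx n m μr) : Prop :=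
  ∀ x : CIdx m n μ,
    ((σ x).1 : ℕ) = m + n - 1 - (x.1 : ℕ) ∧ ((σ x).2 : ℕ) = μ x.1 - 1 - (x.2 : ℕ)

/-- `IsRhoC σ g` says that `g(t_{ij}(u)) = t_{σ(i),σ(j)}(-u)`. -/
def IsRhoC (σ : CIdx m n μ → CIdx n m μr) (g : Yc m n μ → Yc n m μr) : Prop :=
  ∀ (x y : CIdx m n μ) (r : ℕ),
    g (tY (pC m n μ) x y r) = ((-1 : ℂ) ^ r) • tY (pC n m μr) (σ x) (σ y) r

/- ### auxiliary development -/


noncomputable section ZAux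
namespace ZAux

variable {R S : Type} 

lemma ring_inverse_eq [MonoidWithZero R] {a b : R} (h1 : a * b = 1) (h2 : b * a = 1) :
    Ring.inverse a = b := by
  have hu : IsUnit a := ⟨⟨a, b, h1, h2⟩, rfl⟩
  calc Ring.inverse a = Ring.inverse a * (a * b) := by rw [h1, mul_one]
    _ = (Ring.inverse a * a) * b := by rw [mul_assoc]
    _ = b := by rw [Ring.inverse_mul_cancel _ hu, one_mul]

lemma ringHom_inverse [Ring R] [Ring S] (f : R →+* S) {a : R} (h : IsUnit a) :
    f (Ring.inverse a) = Ring.inverse (f a) := by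
  refine (ring_inverse_eq ?_ ?_).symm
  · rw [← map_mul, Ring.mul_inverse_cancel _ h, map_one]
  · rw [← map_mul, Ring.inverse_mul_cancel _ h, map_one]

variable {κ : Type} [Fintype κ] [DecidableEq κ] [Ring S]

/-- Matrices of power series vs power series of matrices. -/
def matPS : Matrix κ κ (PowerSeries S) ≃+* PowerSeries (Matrix κ κ S) where
  toFun A := PowerSeries.mk fun r => Matrix.of fun i j => PowerSeries.coeff (R := S) r (A i j)
  invFun F := Matrix.of fun i j => PowerSeries.mk fun r => PowerSeries.coeff r F i j
  left_inv A := by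
    ext i j
    simp [PowerSeries.coeff_mk]
  right_inv F := by
    ext r i j
    simp [PowerSeries.coeff_mk]
  map_add' A B := by
    ext r i j
    simp [PowerSeries.coeff_mk]
  map_mul' A B := by
    ext r i j
    simp only [PowerSeries.coeff_mk, PowerSeries.coeff_mul, Matrix.mul_apply, Matrix.of_apply,
      map_sum, Finset.sum_apply]
    rw [show (∑ x ∈ Finset.HasAntidiagonal.antidiagonal r,
        (Matrix.of fun i j => (PowerSeries.coeff (R := S) x.1) (A i j)) *
          Matrix.of fun i j => (PowerSeries.coeff (R := S) x.2) (B i j)) i j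
      = ∑ x ∈ Finset.HasAntidiagonal.antidiagonal r, ∑ y : κ,
          (PowerSeries.coeff (R := S) x.1) (A i y) * (PowerSeries.coeff (R := S) x.2) (B y j) from by
        rw [Matrix.sum_apply]
        exact Finset.sum_congr rfl fun x _ => Matrix.mul_apply]
    rw [Finset.sum_comm]

lemma isUnit_of_constantCoeff_one (A : Matrix κ κ (PowerSeries S))
    (h : ∀ i j, PowerSeries.constantCoeff (R := S) (A i j) = if i = j then 1 else 0) : IsUnit A := by
  have : IsUnit ((matPS : Matrix κ κ (PowerSeries S) ≃+* _) A) := by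
    rw [PowerSeries.isUnit_iff_constantCoeff]
    have hc : PowerSeries.constantCoeff ((matPS (S := S) (κ := κ)) A) = 1 := by
      ext i j
      have : (PowerSeries.constantCoeff (R := Matrix κ κ S)) ((matPS (S := S)) A) =
          Matrix.of fun i j => PowerSeries.coeff (R := S) 0 (A i j) := by
        rw [← PowerSeries.coeff_zero_eq_constantCoeff_apply]
        exact PowerSeries.coeff_mk 0 (fun r => Matrix.of fun i j => PowerSeries.coeff (R := S) r (A i j))
      rw [this]
      simp only [Matrix.of_apply, PowerSeries.coeff_zero_eq_constantCoeff_apply, h i j]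
      rw [Matrix.one_apply]
    rw [hc]
    exact isUnit_one
  have h2 := this.map (matPS (S := S) (κ := κ)).symm.toRingHom
  simpa using h2


section Mat

variable {ι κ₁ κ₂ α β : Type} [Fintype ι] [Fintype κ₁] [Fintype κ₂] [Ring R]

lemma submatrix_one_inj [DecidableEq ι] [DecidableEq κ₁] (g : κ₁ → ι)
    (hg : Function.Injective g) : (1 : Matrix ι ι R).submatrix g g = 1 := by
  ext i j
  simp [Matrix.one_apply, hg.eq_iff]

lemma submatrix_one_disj [DecidableEq ι] (g₁ : κ₁ → ι) (g₂ : κ₂ → ι)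
    (h : ∀ i j, g₁ i ≠ g₂ j) : (1 : Matrix ι ι R).submatrix g₁ g₂ = 0 := by
  ext i j
  simp [Matrix.one_apply, h i j]

lemma mul_split (g₁ : κ₁ → ι) (g₂ : κ₂ → ι)
    (hbij : Function.Bijective (Sum.elim g₁ g₂))
    (T : Matrix α ι R) (M : Matrix ι β R) :
    T * M = T.submatrix id g₁ * M.submatrix g₁ id + T.submatrix id g₂ * M.submatrix g₂ id := by
  ext i j
  simp only [Matrix.mul_apply, Matrix.add_apply, Matrix.submatrix_apply, id_eq]
  rw [← Fintype.sum_bijective _ hbij (fun s => T i (Sum.elim g₁ g₂ s) * M (Sum.elim g₁ g₂ s) j)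
    (fun y => T i y * M y j) (fun s => rfl)]
  rw [Fintype.sum_sum_type]
  simp

lemma blocks [DecidableEq ι] (g₁ : κ₁ → ι) (g₂ : κ₂ → ι)
    (hbij : Function.Bijective (Sum.elim g₁ g₂))
    {T M : Matrix ι ι R} (h : T * M = 1) {γ δ : Type} (r : γ → ι) (c : δ → ι) :
    T.submatrix r g₁ * M.submatrix g₁ c + T.submatrix r g₂ * M.submatrix g₂ c
      = (1 : Matrix ι ι R).submatrix r c := by
  ext i j
  have hs : ∑ x : κ₁, T (r i) (g₁ x) * M (g₁ x) (c j)
        + ∑ x : κ₂, T (r i) (g₂ x) * M (g₂ x) (c j)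
      = ∑ y : ι, T (r i) y * M y (c j) := by
    rw [← Fintype.sum_bijective _ hbij
      (fun s => T (r i) (Sum.elim g₁ g₂ s) * M (Sum.elim g₁ g₂ s) (c j))
      (fun y => T (r i) y * M y (c j)) (fun s => rfl), Fintype.sum_sum_type]
    simp
  simp only [Matrix.mul_apply, Matrix.add_apply, Matrix.submatrix_apply]
  rw [hs, ← Matrix.mul_apply, h]

lemma schur [DecidableEq ι] [DecidableEq κ₁] [DecidableEq κ₂]
    (g₁ : κ₁ → ι) (g₂ : κ₂ → ι) (hbij : Function.Bijective (Sum.elim g₁ g₂))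
    (T M : Matrix ι ι R) (hTM : T * M = 1) (hMT : M * T = 1)
    (Ai : Matrix κ₁ κ₁ R) (h1 : T.submatrix g₁ g₁ * Ai = 1) (h2 : Ai * T.submatrix g₁ g₁ = 1) :
    ((T.submatrix g₂ g₂ - T.submatrix g₂ g₁ * Ai * T.submatrix g₁ g₂) * M.submatrix g₂ g₂ = 1 ∧
     M.submatrix g₂ g₂ * (T.submatrix g₂ g₂ - T.submatrix g₂ g₁ * Ai * T.submatrix g₁ g₂) = 1) ∧
    M.submatrix g₁ g₂ = -(Ai * T.submatrix g₁ g₂ * M.submatrix g₂ g₂) ∧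
    M.submatrix g₂ g₁ = -(M.submatrix g₂ g₂ * T.submatrix g₂ g₁ * Ai) := by
  have hinj := hbij.injective
  have hg₂ : Function.Injective g₂ := fun a b hab => by
    have := @hinj (Sum.inr a) (Sum.inr b) (by simpa using hab)
    simpa using this
  have hdisj : ∀ i j, g₁ i ≠ g₂ j := fun i j hij => by
    have := @hinj (Sum.inl i) (Sum.inr j) (by simpa using hij)
    simp at this
  have hdisj' : ∀ i j, g₂ i ≠ g₁ j := fun i j hij => (hdisj j i hij.symm).elim
  have e12 := blocks g₁ g₂ hbij hTM g₁ g₂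
  rw [submatrix_one_disj _ _ hdisj] at e12
  have e22 := blocks g₁ g₂ hbij hTM g₂ g₂
  rw [submatrix_one_inj _ hg₂] at e22
  have f21 := blocks g₁ g₂ hbij hMT g₂ g₁
  rw [submatrix_one_disj _ _ hdisj'] at f21
  have f22 := blocks g₁ g₂ hbij hMT g₂ g₂
  rw [submatrix_one_inj _ hg₂] at f22
  have t1 : T.submatrix g₁ g₁ * M.submatrix g₁ g₂
      = -(T.submatrix g₁ g₂ * M.submatrix g₂ g₂) := eq_neg_of_add_eq_zero_left e12
  have hB : M.submatrix g₁ g₂ = -(Ai * T.submatrix g₁ g₂ * M.submatrix g₂ g₂) := by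
    have h0 : M.submatrix g₁ g₂ = Ai * (T.submatrix g₁ g₁ * M.submatrix g₁ g₂) := by
      rw [← Matrix.mul_assoc, h2, Matrix.one_mul]
    rw [h0, t1, Matrix.mul_neg, ← Matrix.mul_assoc]
  have t2 : M.submatrix g₂ g₁ * T.submatrix g₁ g₁
      = -(M.submatrix g₂ g₂ * T.submatrix g₂ g₁) := eq_neg_of_add_eq_zero_left f21
  have hC : M.submatrix g₂ g₁ = -(M.submatrix g₂ g₂ * T.submatrix g₂ g₁ * Ai) := by
    have h0 : M.submatrix g₂ g₁ = (M.submatrix g₂ g₁ * T.submatrix g₁ g₁) * Ai := by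
      rw [Matrix.mul_assoc, h1, Matrix.mul_one]
    rw [h0, t2, Matrix.neg_mul]
  refine ⟨⟨?_, ?_⟩, hB, hC⟩
  · rw [sub_mul]
    have h0 : T.submatrix g₂ g₁ * Ai * T.submatrix g₁ g₂ * M.submatrix g₂ g₂
        = -(T.submatrix g₂ g₁ * M.submatrix g₁ g₂) := by
      rw [hB, Matrix.mul_neg, neg_neg]
      simp only [Matrix.mul_assoc]
    rw [h0, sub_neg_eq_add, add_comm]
    exact e22
  · rw [mul_sub]
    have h0 : M.submatrix g₂ g₂ * (T.submatrix g₂ g₁ * Ai * T.submatrix g₁ g₂)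
        = -(M.submatrix g₂ g₁ * T.submatrix g₁ g₂) := by
      rw [hC, Matrix.neg_mul, neg_neg]
      simp only [Matrix.mul_assoc]
    rw [h0, sub_neg_eq_add, add_comm]
    exact f22

lemma triple_apply {α β κ κ' : Type} [Fintype κ] [Fintype κ'] [Ring R]
    (P : Matrix α κ R) (Q : Matrix κ κ' R) (W : Matrix κ' β R) (i : α) (j : β) :
    (P * Q * W) i j = ∑ x : κ, ∑ y : κ', P i x * Q x y * W y j := by
  rw [Matrix.mul_apply]
  simp only [Matrix.mul_apply, Finset.sum_mul]
  rw [Finset.sum_comm]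

lemma submatrix_mul_id_right {α β γ ι : Type} [Fintype ι] [Ring R]
    (M : Matrix α ι R) (N : Matrix ι β R) (c : γ → β) :
    (M * N).submatrix id c = M * N.submatrix id c := by
  ext i j
  simp [Matrix.mul_apply]

lemma submatrix_mul_id_left {α β γ ι : Type} [Fintype ι] [Ring R]
    (M : Matrix α ι R) (N : Matrix ι β R) (r : γ → α) :
    (M * N).submatrix r id = M.submatrix r id * N := by
  ext i j
  simp [Matrix.mul_apply]

lemma sum_elim_swap {α β γ : Type} {u : α → γ} {v : β → γ}
    (h : Function.Bijective (Sum.elim u v)) : Function.Bijective (Sum.elim v u) := by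
  have h2 : Sum.elim v u = (Sum.elim u v) ∘ ⇑(Equiv.sumComm β α) := by
    funext s; cases s <;> rfl
  rw [h2]
  exact h.comp (Equiv.sumComm β α).bijective

lemma submatrix_neg' {α β γ δ : Type} [Ring R] (A : Matrix α β R) (r : γ → α) (c : δ → β) :
    (-A).submatrix r c = -(A.submatrix r c) := by
  ext i j
  simp

lemma Egauss {κa κb κG κH : Type} [Fintype κa] [Fintype κb] [Fintype κG] [Fintype κH]
    [DecidableEq κa] [Ring R]
    (Sam SHA : Matrix κa κa R) (c1 : Sam * SHA = 1)
    (T' : Matrix κa κG R) (Li : Matrix κG κG R)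
    (SHAG : Matrix κa κG R) (c4 : SHAG = -(SHA * T' * Li))
    (kB : κb → κG) (kH : κH → κG) (hbij : Function.Bijective (Sum.elim kB kH))
    (L'i : Matrix κH κH R) (CGHB : Matrix κH κb R)
    (c3' : Li.submatrix kH kB = -(L'i * CGHB * Li.submatrix kB kB)) :
    Sam * SHAG.submatrix id kB =
      -((T'.submatrix id kB - T'.submatrix id kH * L'i * CGHB) * Li.submatrix kB kB) := by
  rw [c4, submatrix_neg', submatrix_mul_id_right, Matrix.mul_neg]
  rw [← Matrix.mul_assoc Sam, ← Matrix.mul_assoc Sam SHA T', c1, Matrix.one_mul]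
  rw [mul_split kB kH hbij T' (Li.submatrix id kB)]
  rw [Matrix.submatrix_submatrix, Matrix.submatrix_submatrix]
  simp only [Function.comp_id, Function.id_comp]
  rw [c3', Matrix.mul_neg, ← sub_eq_add_neg, Matrix.sub_mul]
  congr 2
  simp only [Matrix.mul_assoc]

lemma Fgauss {κa κb κG κH : Type} [Fintype κa] [Fintype κb] [Fintype κG] [Fintype κH]
    [DecidableEq κa] [Ring R]
    (SHA Sam : Matrix κa κa R) (c2 : SHA * Sam = 1)
    (T'' : Matrix κG κa R) (Li : Matrix κG κG R)
    (SHGA : Matrix κG κa R) (c3 : SHGA = -(Li * T'' * SHA))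
    (kB : κb → κG) (kH : κH → κG) (hbij : Function.Bijective (Sum.elim kB kH))
    (L'i : Matrix κH κH R) (CGBH : Matrix κb κH R)
    (c4' : Li.submatrix kB kH = -(Li.submatrix kB kB * CGBH * L'i)) :
    SHGA.submatrix kB id * Sam =
      -(Li.submatrix kB kB *
        (T''.submatrix kB id - CGBH * L'i * T''.submatrix kH id)) := by
  rw [c3, submatrix_neg', submatrix_mul_id_left, submatrix_mul_id_left, Matrix.neg_mul]
  rw [Matrix.mul_assoc (Li.submatrix kB id * T'') SHA Sam, c2, Matrix.mul_one]
  rw [mul_split kB kH hbij (Li.submatrix kB id) T'']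
  rw [Matrix.submatrix_submatrix, Matrix.submatrix_submatrix]
  simp only [Function.comp_id, Function.id_comp]
  rw [c4', Matrix.neg_mul, ← sub_eq_add_neg, Matrix.mul_sub]
  congr 2
  simp only [Matrix.mul_assoc]

end Mat

end ZAux
end ZAux

namespace ZMain
open ZAux

lemma tY_zero {I : Type} [DecidableEq I] (p : I → Bool) (i j : I) :
    tY p i j 0 = algebraMap ℂ _ (if i = j then 1 else 0) :=
  (RingQuot.mkAlgHom ℂ (YRel p)).commutes _

lemma ccoeff_tSer {I : Type} [DecidableEq I] (p : I → Bool) (i j : I) :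
    PowerSeries.constantCoeff (tSer p i j) = if i = j then 1 else 0 := by
  rw [← PowerSeries.coeff_zero_eq_constantCoeff_apply]
  unfold tSer
  rw [PowerSeries.coeff_mk, tY_zero]
  split_ifs <;> simp

lemma isUnit_tmat {I : Type} [DecidableEq I] {p : I → Bool} {κ : Type} [Fintype κ]
    [DecidableEq κ] {g : κ → I} (hg : Function.Injective g)
    (A : Matrix κ κ (PowerSeries (Yangian p)))
    (hA : ∀ x y, A x y = tSer p (g x) (g y)) : IsUnit A := by
  apply isUnit_of_constantCoeff_one
  intro x y
  rw [hA, ccoeff_tSer]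
  simp [hg.eq_iff]

variable (m n : ℕ) (μ : Fin (m + n) → ℕ) (μr : Fin (n + m) → ℕ)
variable (σ : CIdx m n μ → CIdx n m μr)

lemma sigma_inj (hσ : IsRevIdx m n μ μr σ) : Function.Injective σ := by
  intro x y hesame
  obtain ⟨h1a, h2a⟩ := hσ x
  obtain ⟨h1b, h2b⟩ := hσ y
  rw [hesame] at h1a h2a
  have hia := x.1.isLt
  have hib := y.1.isLt
  have hab : x.1 = y.1 := Fin.ext (by omega)
  have hii := x.2.isLt
  have hij := y.2.isLt
  have h3 : μ x.1 = μ y.1 := congrArg μ hab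
  refine Sigma.ext hab ?_
  rw [Fin.heq_ext_iff h3]
  omega

lemma card_eq (hrev : ∀ (a : Fin (m + n)) (b : Fin (n + m)),
      (b : ℕ) = m + n - 1 - (a : ℕ) → μr b = μ a) :
    Fintype.card (CIdx n m μr) = Fintype.card (CIdx m n μ) := by
  classical
  rw [Fintype.card_sigma, Fintype.card_sigma]
  simp only [Fintype.card_fin]
  refine Fintype.sum_bijective
    (fun b : Fin (n + m) => (⟨m + n - 1 - (b : ℕ), by have := b.isLt; omega⟩ : Fin (m + n)))
    ⟨?_, ?_⟩ _ _ ?_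
  · intro b c hbc
    have hb := b.isLt
    have hc := c.isLt
    have h2 := congrArg Fin.val hbc
    simp only [] at h2
    exact Fin.ext (by omega)
  · intro a
    have ha := a.isLt
    refine ⟨⟨m + n - 1 - (a : ℕ), by omega⟩, Fin.ext ?_⟩
    show m + n - 1 - (m + n - 1 - (a:ℕ)) = (a:ℕ)
    omega
  · intro b
    have hb := b.isLt
    refine hrev ⟨m + n - 1 - (b : ℕ), by omega⟩ b ?_
    show (b : ℕ) = m + n - 1 - (m + n - 1 - (b : ℕ))
    omega

lemma sigma_bij (hσ : IsRevIdx m n μ μr σ)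
    (hrev : ∀ (a : Fin (m + n)) (b : Fin (n + m)),
      (b : ℕ) = m + n - 1 - (a : ℕ) → μr b = μ a) : Function.Bijective σ :=
  (Fintype.bijective_iff_injective_and_card σ).2
    ⟨sigma_inj m n μ μr σ hσ, (card_eq m n μ μr hrev).symm⟩

lemma sigma_spec (hσ : IsRevIdx m n μ μr σ) {x : CIdx m n μ} {y : CIdx n m μr}
    (h1 : (y.1 : ℕ) = m + n - 1 - (x.1 : ℕ)) (h2 : (y.2 : ℕ) = μ x.1 - 1 - (x.2 : ℕ)) :
    σ x = y := by
  obtain ⟨ha, hi⟩ := hσ x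
  have hblock : (σ x).1 = y.1 := Fin.ext (by rw [ha, h1])
  refine Sigma.ext hblock ?_
  rw [Fin.heq_ext_iff (congrArg μr hblock)]
  rw [hi, h2]

/-- The pulled-back target `T`-matrix. -/
def Tσm : Matrix (CIdx m n μ) (CIdx m n μ) (Rc n m μr) := fun x y => tSer _ (σ x) (σ y)

variable (f : Yc m n μ →+* Yc n m μr)

/-- The `ζ`-image of the source `T`-matrix. -/
def Mz : Matrix (CIdx m n μ) (CIdx m n μ) (Rc n m μr) :=
  fun x y => PowerSeries.map f (Tc m n μ x y)

lemma zeta_T (ρ : Yc m n μ ≃ₐ[ℂ] Yc n m μr) (hρ : IsRhoC m n μ μr σ ⇑ρ)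
    (ω : Yc m n μ ≃ₐ[ℂ] Yc m n μ) (hω : IsOmegaC m n μ ω.toAlgHom.toRingHom) :
    Mz m n μ μr (ρ.toAlgHom.comp ω.toAlgHom).toRingHom * Tσm m n μ μr σ = 1 ∧
    Tσm m n μ μr σ * Mz m n μ μr (ρ.toAlgHom.comp ω.toAlgHom).toRingHom = 1 := by
  obtain ⟨h1, h2⟩ := hω
  have e1 : (PowerSeries.map ρ.toAlgHom.toRingHom).mapMatrix
      (Matrix.of fun i j => PowerSeries.map ω.toAlgHom.toRingHom (Tc m n μ i j)) =
      Mz m n μ μr (ρ.toAlgHom.comp ω.toAlgHom).toRingHom := by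
    apply Matrix.ext
    intro x y
    apply PowerSeries.ext
    intro r
    simp [Mz, RingHom.mapMatrix_apply, Matrix.map_apply, PowerSeries.coeff_map]
  have e2 : (PowerSeries.map ρ.toAlgHom.toRingHom).mapMatrix (TcNeg m n μ) =
      Tσm m n μ μr σ := by
    apply Matrix.ext
    intro x y
    apply PowerSeries.ext
    intro r
    rw [RingHom.mapMatrix_apply, Matrix.map_apply, PowerSeries.coeff_map]
    show ρ ((PowerSeries.coeff r) (TcNeg m n μ x y)) = _
    unfold TcNeg Tσm tSer
    rw [PowerSeries.coeff_mk, PowerSeries.coeff_mk]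
    rw [map_smul, hρ x y r, smul_smul, ← pow_add,
      Even.neg_one_pow ⟨r, rfl⟩, one_smul]
  constructor
  · have h := congrArg (PowerSeries.map ρ.toAlgHom.toRingHom).mapMatrix h1
    rw [map_mul, map_one, e1, e2] at h
    exact h
  · have h := congrArg (PowerSeries.map ρ.toAlgHom.toRingHom).mapMatrix h2
    rw [map_mul, map_one, e1, e2] at h
    exact h


/- generic quasideterminant shape -/
def QDg (M N : ℕ) (ν : Fin (M + N) → ℕ) (a p q : Fin (M + N)) :
    Matrix (Fin (ν p)) (Fin (ν q)) (Rc M N ν) :=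
  fun i j => Tc M N ν ⟨p, i⟩ ⟨q, j⟩ -
    ∑ x : CICorner M N ν a, ∑ y : CICorner M N ν a,
      Tc M N ν ⟨p, i⟩ x.1 * Ring.inverse (Acorner M N ν a) x y * Tc M N ν y.1 ⟨q, j⟩

lemma Dmat_QDg (M N : ℕ) (ν : Fin (M + N) → ℕ) (a : Fin (M + N)) :
    Dmat M N ν a = QDg M N ν a a a := rfl

lemma quasE_QDg (M N : ℕ) (ν : Fin (M + N) → ℕ) (a b : Fin (M + N)) :
    quasE M N ν a b = QDg M N ν a a b := rfl

lemma quasF_QDg (M N : ℕ) (ν : Fin (M + N) → ℕ) (b a : Fin (M + N)) :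
    quasF M N ν b a = QDg M N ν a b a := rfl

/- index subtypes -/
abbrev GTt (c : ℕ) := {x : CIdx m n μ // c < (x.1 : ℕ)}
abbrev WTt (a : Fin (m + n)) := {x : CIdx m n μ // ¬ ((x.1 : ℕ) < (a : ℕ))}

def hAm (a : Fin (m + n)) : Fin (μ a) → WTt m n μ a := fun i => ⟨⟨a, i⟩, by simp⟩
def hGm (a : Fin (m + n)) : GTt m n μ (a : ℕ) → WTt m n μ a :=
  fun x => ⟨x.1, by have := x.2; omega⟩
def kBm (β : ℕ) (h : β + 1 < m + n) : Fin (μ (blk' m n β h)) → GTt m n μ β :=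
  fun j => ⟨⟨blk' m n β h, j⟩, Nat.lt_succ_self β⟩
def kHm (β : ℕ) : GTt m n μ (β + 1) → GTt m n μ β :=
  fun x => ⟨x.1, by have := x.2; omega⟩

lemma split1 (a : Fin (m + n)) :
    Function.Bijective (Sum.elim (Subtype.val : CICorner m n μ a → CIdx m n μ)
      (Subtype.val : WTt m n μ a → CIdx m n μ)) :=
  (Equiv.sumCompl fun x : CIdx m n μ => (x.1 : ℕ) < (a : ℕ)).bijective

lemma sum_elim_block_bij (p q : CIdx m n μ → Prop) [DecidablePred p] [DecidablePred q]
    (a : Fin (m + n))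
    (gA : Fin (μ a) → {x : CIdx m n μ // p x}) (gQ : {x : CIdx m n μ // q x} → {x // p x})
    (hgA : ∀ i, (gA i).1 = ⟨a, i⟩) (hgQ : ∀ y, (gQ y).1 = y.1)
    (hqa : ∀ x, q x → ¬(x.1 = a)) (hmid : ∀ x, p x → x.1 = a ∨ q x) :
    Function.Bijective (Sum.elim gA gQ) := by
  constructor
  · rintro (i | u) (v | w) hsum <;> simp only [Sum.elim_inl, Sum.elim_inr] at hsum
    · have h := congrArg Subtype.val hsum
      rw [hgA, hgA] at h
      have h2 := (Sigma.mk.inj_iff.mp h).2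
      exact congrArg Sum.inl (eq_of_heq h2)
    · have h := congrArg Subtype.val hsum
      rw [hgA, hgQ] at h
      exact (hqa _ w.2 (congrArg Sigma.fst h).symm).elim
    · have h := congrArg Subtype.val hsum
      rw [hgA, hgQ] at h
      exact (hqa _ u.2 (congrArg Sigma.fst h)).elim
    · have h := congrArg Subtype.val hsum
      rw [hgQ, hgQ] at h
      exact congrArg Sum.inr (Subtype.ext h)
  · rintro ⟨x, hx⟩
    rcases hmid x hx with heq | hq
    · obtain ⟨c, k⟩ := x
      have hc : c = a := heq
      subst hc
      exact ⟨Sum.inl k, Subtype.ext (hgA k)⟩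
    · exact ⟨Sum.inr ⟨x, hq⟩, Subtype.ext (hgQ _)⟩

lemma split2 (a : Fin (m + n)) :
    Function.Bijective (Sum.elim (hAm m n μ a) (hGm m n μ a)) := by
  refine sum_elim_block_bij m n μ _ _ a _ _ (fun i => rfl) (fun y => rfl) ?_ ?_
  · intro x hx heq
    rw [heq] at hx
    exact lt_irrefl _ hx
  · intro x hx
    by_cases hxa : (x.1 : ℕ) = (a : ℕ)
    · exact Or.inl (Fin.ext hxa)
    · exact Or.inr (by omega)

lemma split3 (β : ℕ) (h : β + 1 < m + n) :
    Function.Bijective (Sum.elim (kBm m n μ β h) (kHm m n μ β)) := by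
  refine sum_elim_block_bij m n μ _ _ (blk' m n β h) _ _ (fun i => rfl) (fun y => rfl) ?_ ?_
  · intro x hx heq
    have : (x.1 : ℕ) = β + 1 := congrArg Fin.val heq
    omega
  · intro x hx
    by_cases hxa : (x.1 : ℕ) = β + 1
    · exact Or.inl (Fin.ext hxa)
    · exact Or.inr (by omega)

/- canonical matrices -/
def TσW (a : Fin (m + n)) : Matrix (WTt m n μ a) (WTt m n μ a) (Rc n m μr) :=
  (Tσm m n μ μr σ).submatrix Subtype.val Subtype.val

def CG (c : ℕ) : Matrix (GTt m n μ c) (GTt m n μ c) (Rc n m μr) :=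
  (Tσm m n μ μr σ).submatrix Subtype.val Subtype.val

def MzL (a : Fin (m + n)) : Matrix (CICorner m n μ a) (CICorner m n μ a) (Rc n m μr) :=
  (Mz m n μ μr f).submatrix Subtype.val Subtype.val

def SHat (a : Fin (m + n)) : Matrix (WTt m n μ a) (WTt m n μ a) (Rc n m μr) :=
  (Mz m n μ μr f).submatrix Subtype.val Subtype.val -
    (Mz m n μ μr f).submatrix Subtype.val (Subtype.val : CICorner m n μ a → _) *
      Ring.inverse (MzL m n μ μr f a) *
      (Mz m n μ μr f).submatrix (Subtype.val : CICorner m n μ a → _) Subtype.val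

def Sam (a : Fin (m + n)) : Matrix (Fin (μ a)) (Fin (μ a)) (Rc n m μr) :=
  (TσW m n μ μr σ a).submatrix (hAm m n μ a) (hAm m n μ a) -
    (TσW m n μ μr σ a).submatrix (hAm m n μ a) (hGm m n μ a) *
      Ring.inverse (CG m n μ μr σ (a : ℕ)) *
      (TσW m n μ μr σ a).submatrix (hGm m n μ a) (hAm m n μ a)

def Sbm (β : ℕ) (h : β + 1 < m + n) :
    Matrix (Fin (μ (blk' m n β h))) (Fin (μ (blk' m n β h))) (Rc n m μr) :=
  (CG m n μ μr σ β).submatrix (kBm m n μ β h) (kBm m n μ β h) -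
    (CG m n μ μr σ β).submatrix (kBm m n μ β h) (kHm m n μ β) *
      Ring.inverse (CG m n μ μr σ (β + 1)) *
      (CG m n μ μr σ β).submatrix (kHm m n μ β) (kBm m n μ β h)

def QFm (β : ℕ) (h : β + 1 < m + n) :
    Matrix (Fin (μ (blk m n β h))) (Fin (μ (blk' m n β h))) (Rc n m μr) :=
  (TσW m n μ μr σ (blk m n β h)).submatrix (hAm m n μ (blk m n β h))
      (hGm m n μ (blk m n β h) ∘ kBm m n μ β h) -
    (TσW m n μ μr σ (blk m n β h)).submatrix (hAm m n μ (blk m n β h))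
        (hGm m n μ (blk m n β h) ∘ kHm m n μ β) *
      Ring.inverse (CG m n μ μr σ (β + 1)) *
      (CG m n μ μr σ β).submatrix (kHm m n μ β) (kBm m n μ β h)

def QEm (β : ℕ) (h : β + 1 < m + n) :
    Matrix (Fin (μ (blk' m n β h))) (Fin (μ (blk m n β h))) (Rc n m μr) :=
  (TσW m n μ μr σ (blk m n β h)).submatrix
      (hGm m n μ (blk m n β h) ∘ kBm m n μ β h) (hAm m n μ (blk m n β h)) -
    (CG m n μ μr σ β).submatrix (kBm m n μ β h) (kHm m n μ β) *
      Ring.inverse (CG m n μ μr σ (β + 1)) *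
      (TσW m n μ μr σ (blk m n β h)).submatrix
        (hGm m n μ (blk m n β h) ∘ kHm m n μ β) (hAm m n μ (blk m n β h))

/- units -/
lemma uAc (a : Fin (m + n)) : IsUnit (Acorner m n μ a) :=
  isUnit_tmat (Subtype.val_injective) _ (fun _ _ => rfl)

lemma uCG (hσ : IsRevIdx m n μ μr σ) (c : ℕ) : IsUnit (CG m n μ μr σ c) :=
  isUnit_tmat ((sigma_inj m n μ μr σ hσ).comp Subtype.val_injective) _ (fun _ _ => rfl)

lemma MzL_eq (a : Fin (m + n)) :
    MzL m n μ μr f a = (PowerSeries.map f).mapMatrix (Acorner m n μ a) := by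
  ext x y
  rfl

lemma uMzL (a : Fin (m + n)) : IsUnit (MzL m n μ μr f a) := by
  rw [MzL_eq]
  exact (uAc m n μ a).map _

lemma RI_MzL (a : Fin (m + n)) :
    Ring.inverse (MzL m n μ μr f a) =
      (PowerSeries.map f).mapMatrix (Ring.inverse (Acorner m n μ a)) := by
  rw [MzL_eq, ringHom_inverse _ (uAc m n μ a)]

lemma cnv2 (a : Fin (m + n)) :
    (TσW m n μ μr σ a).submatrix (hGm m n μ a) (hGm m n μ a) = CG m n μ μr σ (a : ℕ) := by
  ext x y
  rfl

lemma cnv3 (β : ℕ) :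
    (CG m n μ μr σ β).submatrix (kHm m n μ β) (kHm m n μ β) = CG m n μ μr σ (β + 1) := by
  ext x y
  rfl

/- Schur step 1 -/
lemma schur1 (hTM : Tσm m n μ μr σ * Mz m n μ μr f = 1)
    (hMT : Mz m n μ μr f * Tσm m n μ μr σ = 1) (a : Fin (m + n)) :
    SHat m n μ μr f a * TσW m n μ μr σ a = 1 ∧
    TσW m n μ μr σ a * SHat m n μ μr f a = 1 :=
  (schur (Subtype.val : CICorner m n μ a → _) (Subtype.val : WTt m n μ a → _)
    (split1 m n μ a) (Mz m n μ μr f) (Tσm m n μ μr σ) hMT hTM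
    (Ring.inverse (MzL m n μ μr f a))
    (Ring.mul_inverse_cancel _ (uMzL m n μ μr f a))
    (Ring.inverse_mul_cancel _ (uMzL m n μ μr f a))).1

/- Schur step 2 -/
lemma schur2 (hσ : IsRevIdx m n μ μr σ)
    (h1 : SHat m n μ μr f a * TσW m n μ μr σ a = 1)
    (h2 : TσW m n μ μr σ a * SHat m n μ μr f a = 1) :
    (Sam m n μ μr σ a * (SHat m n μ μr f a).submatrix (hAm m n μ a) (hAm m n μ a) = 1 ∧
     (SHat m n μ μr f a).submatrix (hAm m n μ a) (hAm m n μ a) * Sam m n μ μr σ a = 1) ∧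
    (SHat m n μ μr f a).submatrix (hGm m n μ a) (hAm m n μ a) =
      -(Ring.inverse (CG m n μ μr σ (a : ℕ)) *
        (TσW m n μ μr σ a).submatrix (hGm m n μ a) (hAm m n μ a) *
        (SHat m n μ μr f a).submatrix (hAm m n μ a) (hAm m n μ a)) ∧
    (SHat m n μ μr f a).submatrix (hAm m n μ a) (hGm m n μ a) =
      -((SHat m n μ μr f a).submatrix (hAm m n μ a) (hAm m n μ a) *
        (TσW m n μ μr σ a).submatrix (hAm m n μ a) (hGm m n μ a) *
        Ring.inverse (CG m n μ μr σ (a : ℕ))) := by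
  have hc1 : (TσW m n μ μr σ a).submatrix (hGm m n μ a) (hGm m n μ a) *
      Ring.inverse (CG m n μ μr σ (a : ℕ)) = 1 := by
    rw [cnv2]
    exact Ring.mul_inverse_cancel _ (uCG m n μ μr σ hσ _)
  have hc2 : Ring.inverse (CG m n μ μr σ (a : ℕ)) *
      (TσW m n μ μr σ a).submatrix (hGm m n μ a) (hGm m n μ a) = 1 := by
    rw [cnv2]
    exact Ring.inverse_mul_cancel _ (uCG m n μ μr σ hσ _)
  exact schur (hGm m n μ a) (hAm m n μ a) (sum_elim_swap (split2 m n μ a))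
    (TσW m n μ μr σ a) (SHat m n μ μr f a) h2 h1 _ hc1 hc2

/- Schur step 3 -/
lemma schur3 (hσ : IsRevIdx m n μ μr σ) (β : ℕ) (h : β + 1 < m + n) :
    (Sbm m n μ μr σ β h *
        (Ring.inverse (CG m n μ μr σ β)).submatrix (kBm m n μ β h) (kBm m n μ β h) = 1 ∧
     (Ring.inverse (CG m n μ μr σ β)).submatrix (kBm m n μ β h) (kBm m n μ β h) *
        Sbm m n μ μr σ β h = 1) ∧
    (Ring.inverse (CG m n μ μr σ β)).submatrix (kHm m n μ β) (kBm m n μ β h) =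
      -(Ring.inverse (CG m n μ μr σ (β + 1)) *
        (CG m n μ μr σ β).submatrix (kHm m n μ β) (kBm m n μ β h) *
        (Ring.inverse (CG m n μ μr σ β)).submatrix (kBm m n μ β h) (kBm m n μ β h)) ∧
    (Ring.inverse (CG m n μ μr σ β)).submatrix (kBm m n μ β h) (kHm m n μ β) =
      -((Ring.inverse (CG m n μ μr σ β)).submatrix (kBm m n μ β h) (kBm m n μ β h) *
        (CG m n μ μr σ β).submatrix (kBm m n μ β h) (kHm m n μ β) *
        Ring.inverse (CG m n μ μr σ (β + 1))) := by
  have hc1 : (CG m n μ μr σ β).submatrix (kHm m n μ β) (kHm m n μ β) *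
      Ring.inverse (CG m n μ μr σ (β + 1)) = 1 := by
    rw [cnv3]
    exact Ring.mul_inverse_cancel _ (uCG m n μ μr σ hσ _)
  have hc2 : Ring.inverse (CG m n μ μr σ (β + 1)) *
      (CG m n μ μr σ β).submatrix (kHm m n μ β) (kHm m n μ β) = 1 := by
    rw [cnv3]
    exact Ring.inverse_mul_cancel _ (uCG m n μ μr σ hσ _)
  exact schur (kHm m n μ β) (kBm m n μ β h) (sum_elim_swap (split3 m n μ β h))
    (CG m n μ μr σ β) (Ring.inverse (CG m n μ μr σ β))
    (Ring.mul_inverse_cancel _ (uCG m n μ μr σ hσ β))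
    (Ring.inverse_mul_cancel _ (uCG m n μ μr σ hσ β)) _ hc1 hc2


lemma uDmat (a : Fin (m + n)) : IsUnit (Dmat m n μ a) := by
  apply isUnit_of_constantCoeff_one
  intro i j
  show PowerSeries.constantCoeff (Dmat m n μ a i j) = _
  unfold Dmat
  rw [map_sub, map_sum]
  have h1 : PowerSeries.constantCoeff (Tc m n μ ⟨a, i⟩ ⟨a, j⟩) =
      if i = j then (1 : Yc m n μ) else 0 := by
    rw [show Tc m n μ ⟨a, i⟩ ⟨a, j⟩ = tSer _ ⟨a, i⟩ ⟨a, j⟩ from rfl, ccoeff_tSer]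
    simp [Sigma.mk.inj_iff]
  have h2 : ∀ x : CICorner m n μ a,
      PowerSeries.constantCoeff (∑ y : CICorner m n μ a,
        Tc m n μ ⟨a, i⟩ x.1 * Ring.inverse (Acorner m n μ a) x y * Tc m n μ y.1 ⟨a, j⟩) = 0 := by
    intro x
    rw [map_sum]
    refine Finset.sum_eq_zero fun y _ => ?_
    rw [map_mul, map_mul]
    have hz : PowerSeries.constantCoeff (Tc m n μ ⟨a, i⟩ x.1) = 0 := by
      rw [show Tc m n μ ⟨a, i⟩ x.1 = tSer _ _ _ from rfl, ccoeff_tSer, if_neg]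
      intro hcon
      have hb := congrArg Sigma.fst hcon
      have hx := x.2
      rw [← hb] at hx
      exact lt_irrefl _ hx
    rw [hz, zero_mul, zero_mul]
  rw [Finset.sum_congr rfl (fun x _ => h2 x), Finset.sum_const_zero, sub_zero, h1]

lemma mapQD (a p q : Fin (m + n)) (u : Fin (μ p) → WTt m n μ a) (v : Fin (μ q) → WTt m n μ a)
    (hu : ∀ i, (u i).1 = (⟨p, i⟩ : CIdx m n μ)) (hv : ∀ j, (v j).1 = (⟨q, j⟩ : CIdx m n μ)) :
    (QDg m n μ a p q).map (⇑(PowerSeries.map f)) = (SHat m n μ μr f a).submatrix u v := by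
  have hRI : ∀ x y, (PowerSeries.map f) (Ring.inverse (Acorner m n μ a) x y) =
      Ring.inverse (MzL m n μ μr f a) x y := by
    intro x y
    rw [RI_MzL]
    rfl
  apply Matrix.ext
  intro i j
  rw [Matrix.map_apply, Matrix.submatrix_apply]
  show (PowerSeries.map f) (QDg m n μ a p q i j) = SHat m n μ μr f a (u i) (v j)
  unfold QDg SHat
  rw [Matrix.sub_apply, triple_apply, map_sub, map_sum]
  congr 1
  · show (PowerSeries.map f) (Tc m n μ ⟨p, i⟩ ⟨q, j⟩) =
      (Mz m n μ μr f).submatrix Subtype.val Subtype.val (u i) (v j)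
    rw [Matrix.submatrix_apply, hu, hv]
    rfl
  · refine Finset.sum_congr rfl fun x _ => ?_
    rw [map_sum]
    refine Finset.sum_congr rfl fun y _ => ?_
    rw [map_mul, map_mul, hRI]
    congr 1
    · congr 1
      · show (PowerSeries.map f) (Tc m n μ ⟨p, i⟩ x.1) =
          (Mz m n μ μr f).submatrix Subtype.val (Subtype.val : CICorner m n μ a → _) (u i) x
        rw [Matrix.submatrix_apply, hu]
        rfl
    · show (PowerSeries.map f) (Tc m n μ y.1 ⟨q, j⟩) =
        (Mz m n μ μr f).submatrix (Subtype.val : CICorner m n μ a → _) Subtype.val y (v j)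
      rw [Matrix.submatrix_apply, hv]
      rfl

lemma mapDmat (a : Fin (m + n)) :
    (Dmat m n μ a).map (⇑(PowerSeries.map f)) =
      (SHat m n μ μr f a).submatrix (hAm m n μ a) (hAm m n μ a) := by
  rw [Dmat_QDg]
  exact mapQD m n μ μr f a a a _ _ (fun _ => rfl) (fun _ => rfl)

lemma mapDmat' (a : Fin (m + n)) :
    (Dmat' m n μ a).map (⇑(PowerSeries.map f)) =
      Ring.inverse ((SHat m n μ μr f a).submatrix (hAm m n μ a) (hAm m n μ a)) := by
  unfold Dmat'
  have h := ringHom_inverse ((PowerSeries.map f).mapMatrix (m := Fin (μ a)))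
    (uDmat m n μ a)
  rw [RingHom.mapMatrix_apply, RingHom.mapMatrix_apply] at h
  rw [h, mapDmat]

lemma pull (hσ : IsRevIdx m n μ μr σ)
    (hrev : ∀ (a : Fin (m + n)) (b : Fin (n + m)),
      (b : ℕ) = m + n - 1 - (a : ℕ) → μr b = μ a)
    (hbijσ : Function.Bijective σ)
    (s p q : Fin (m + n)) (t p' q' : Fin (n + m))
    (hst : (s : ℕ) + (t : ℕ) + 1 = m + n)
    (hpp : (p' : ℕ) = m + n - 1 - (p : ℕ))
    (hqq : (q' : ℕ) = m + n - 1 - (q : ℕ))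
    (rp : Fin (μr p') → Fin (μ p)) (hrp : ∀ k, ((rp k) : ℕ) = μ p - 1 - (k : ℕ))
    (rq : Fin (μr q') → Fin (μ q)) (hrq : ∀ l, ((rq l) : ℕ) = μ q - 1 - (l : ℕ))
    (W : Matrix (Fin (μ p)) (Fin (μ q)) (Rc n m μr))
    (hW : ∀ i j, W i j = Tσm m n μ μr σ ⟨p, i⟩ ⟨q, j⟩)
    (U : Matrix (Fin (μ p)) (GTt m n μ (s : ℕ)) (Rc n m μr))
    (hU : ∀ i x, U i x = Tσm m n μ μr σ ⟨p, i⟩ x.1)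
    (V : Matrix (GTt m n μ (s : ℕ)) (Fin (μ q)) (Rc n m μr))
    (hV : ∀ x j, V x j = Tσm m n μ μr σ x.1 ⟨q, j⟩) :
    QDg n m μr t p' q' =
      (W - U * Ring.inverse (CG m n μ μr σ (s : ℕ)) * V).submatrix rp rq := by
  have hmem : ∀ x : GTt m n μ (s : ℕ), ((σ x.1).1 : ℕ) < (t : ℕ) := by
    intro x
    have h1 := (hσ x.1).1
    have h2 := x.2
    have h3 := x.1.1.isLt
    omega
  have hgbij : Function.Bijective
      (fun x : GTt m n μ (s : ℕ) => (⟨σ x.1, hmem x⟩ : CICorner n m μr t)) := by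
    constructor
    · intro x y hxy
      have h := congrArg Subtype.val hxy
      exact Subtype.ext (hbijσ.injective h)
    · rintro ⟨z, hz⟩
      obtain ⟨x, hx⟩ := hbijσ.surjective z
      have hxs : (s : ℕ) < (x.1 : ℕ) := by
        have h1 := (hσ x).1
        rw [hx] at h1
        have h3 := x.1.isLt
        omega
      exact ⟨⟨x, hxs⟩, Subtype.ext hx⟩
  set eS : GTt m n μ (s : ℕ) ≃ CICorner n m μr t := Equiv.ofBijective _ hgbij with heS
  have heSval : ∀ x, ((eS x).1 : CIdx n m μr) = σ x.1 := fun x => rfl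
  have hsymmval : ∀ u : CICorner n m μr t, σ ((eS.symm u).1) = u.1 := by
    intro u
    have := congrArg Subtype.val (eS.apply_symm_apply u)
    rw [← this]
    rfl
  have hAc : Acorner n m μr t = (CG m n μ μr σ (s : ℕ)).submatrix ⇑eS.symm ⇑eS.symm := by
    apply Matrix.ext
    intro u v
    rw [Matrix.submatrix_apply]
    show Tc n m μr u.1 v.1 = Tσm m n μ μr σ (eS.symm u).1 (eS.symm v).1
    rw [show Tσm m n μ μr σ (eS.symm u).1 (eS.symm v).1
        = tSer _ (σ (eS.symm u).1) (σ (eS.symm v).1) from rfl, hsymmval, hsymmval]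
    rfl
  have hRI : Ring.inverse (Acorner n m μr t)
      = (Ring.inverse (CG m n μ μr σ (s : ℕ))).submatrix ⇑eS.symm ⇑eS.symm := by
    rw [hAc]
    refine ring_inverse_eq ?_ ?_
    · rw [Matrix.submatrix_mul_equiv, Ring.mul_inverse_cancel _ (uCG m n μ μr σ hσ _)]
      exact submatrix_one_inj _ eS.symm.injective
    · rw [Matrix.submatrix_mul_equiv, Ring.inverse_mul_cancel _ (uCG m n μ μr σ hσ _)]
      exact submatrix_one_inj _ eS.symm.injective
  have hμp : μr p' = μ p := hrev p p' hpp
  have hμq : μr q' = μ q := hrev q q' hqq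
  apply Matrix.ext
  intro k l
  have hσp : σ ⟨p, rp k⟩ = (⟨p', k⟩ : CIdx n m μr) := by
    refine sigma_spec m n μ μr σ hσ hpp ?_
    show (k : ℕ) = μ p - 1 - ((rp k : ℕ))
    have h4 := hrp k
    have hk := k.isLt
    omega
  have hσq : σ ⟨q, rq l⟩ = (⟨q', l⟩ : CIdx n m μr) := by
    refine sigma_spec m n μ μr σ hσ hqq ?_
    show (l : ℕ) = μ q - 1 - ((rq l : ℕ))
    have h4 := hrq l
    have hl := l.isLt
    omega
  rw [Matrix.submatrix_apply, Matrix.sub_apply, triple_apply]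
  show QDg n m μr t p' q' k l = _
  unfold QDg
  congr 1
  · rw [hW]
    show Tc n m μr ⟨p', k⟩ ⟨q', l⟩ = tSer _ (σ ⟨p, rp k⟩) (σ ⟨q, rq l⟩)
    rw [hσp, hσq]
    rfl
  · rw [hRI]
    refine Fintype.sum_equiv eS.symm _ _ fun x => ?_
    refine Fintype.sum_equiv eS.symm _ _ fun y => ?_
    congr 1
    · congr 1
      · rw [hU]
        show Tc n m μr ⟨p', k⟩ x.1 = tSer _ (σ ⟨p, rp k⟩) (σ (eS.symm x).1)
        rw [hσp, hsymmval]
        rfl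
    · rw [hV]
      show Tc n m μr y.1 ⟨q', l⟩ = tSer _ (σ (eS.symm y).1) (σ ⟨q, rq l⟩)
      rw [hσq, hsymmval]
      rfl


lemma auxD (hσ : IsRevIdx m n μ μr σ)
    (hrev : ∀ (a : Fin (m + n)) (b : Fin (n + m)),
      (b : ℕ) = m + n - 1 - (a : ℕ) → μr b = μ a)
    (hTM : Tσm m n μ μr σ * Mz m n μ μr f = 1)
    (hMT : Mz m n μ μr f * Tσm m n μ μr σ = 1)
    (a : Fin (m + n)) (i j : Fin (μ a)) (a' : Fin (n + m)) (i' j' : Fin (μr a'))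
    (h1 : (a' : ℕ) = m + n - 1 - (a : ℕ))
    (h2 : (i' : ℕ) = μ a - 1 - (i : ℕ)) (h3 : (j' : ℕ) = μ a - 1 - (j : ℕ)) :
    PowerSeries.map f (Dmat m n μ a i j) = Dmat' n m μr a' i' j' := by
  obtain ⟨s1, s2⟩ := schur1 m n μ μr σ f hTM hMT a
  obtain ⟨⟨c1, c2⟩, c3, c4⟩ := schur2 m n μ μr σ f hσ s1 s2
  have hbσ := sigma_bij m n μ μr σ hσ hrev
  have hμ : μr a' = μ a := hrev a a' h1
  have hkl : ∀ k : Fin (μr a'), (μ a - 1 - (k : ℕ)) < μ a := fun k => by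
    have := k.isLt; omega
  set rp : Fin (μr a') → Fin (μ a) := fun k => ⟨μ a - 1 - (k : ℕ), hkl k⟩ with hrpdef
  have hrp : ∀ k, ((rp k) : ℕ) = μ a - 1 - (k : ℕ) := fun k => rfl
  have hrpb : Function.Bijective rp := by
    rw [Fintype.bijective_iff_injective_and_card]
    constructor
    · intro k l hklq
      have hval : (μ a - 1 - (k : ℕ)) = (μ a - 1 - (l : ℕ)) := congrArg Fin.val hklq
      have := k.isLt
      have := l.isLt
      exact Fin.ext (by omega)
    · simp [hμ]
  set rpE : Fin (μr a') ≃ Fin (μ a) := Equiv.ofBijective rp hrpb with hrpE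
  have hst : (a : ℕ) + (a' : ℕ) + 1 = m + n := by
    have := a.isLt; omega
  have hpull : QDg n m μr a' a' a' = (Sam m n μ μr σ a).submatrix rp rp :=
    pull m n μ μr σ hσ hrev hbσ a a a a' a' a' hst h1 h1 rp hrp rp hrp
      ((TσW m n μ μr σ a).submatrix (hAm m n μ a) (hAm m n μ a)) (fun _ _ => rfl)
      ((TσW m n μ μr σ a).submatrix (hAm m n μ a) (hGm m n μ a)) (fun _ _ => rfl)
      ((TσW m n μ μr σ a).submatrix (hGm m n μ a) (hAm m n μ a)) (fun _ _ => rfl)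
  have hDt : Dmat n m μr a' = (Sam m n μ μr σ a).submatrix rp rp := by
    rw [Dmat_QDg]; exact hpull
  have hmul1 : (Sam m n μ μr σ a).submatrix ⇑rpE ⇑rpE *
      ((SHat m n μ μr f a).submatrix (hAm m n μ a) (hAm m n μ a)).submatrix ⇑rpE ⇑rpE = 1 := by
    rw [Matrix.submatrix_mul_equiv, c1]
    exact submatrix_one_inj _ rpE.injective
  have hmul2 : ((SHat m n μ μr f a).submatrix (hAm m n μ a) (hAm m n μ a)).submatrix ⇑rpE ⇑rpE *
      (Sam m n μ μr σ a).submatrix ⇑rpE ⇑rpE = 1 := by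
    rw [Matrix.submatrix_mul_equiv, c2]
    exact submatrix_one_inj _ rpE.injective
  have hfin : Dmat' n m μr a' =
      ((SHat m n μ μr f a).submatrix (hAm m n μ a) (hAm m n μ a)).submatrix rp rp := by
    unfold Dmat'
    rw [hDt]
    exact ring_inverse_eq hmul1 hmul2
  have hLHS : PowerSeries.map f (Dmat m n μ a i j) =
      (SHat m n μ μr f a).submatrix (hAm m n μ a) (hAm m n μ a) i j := by
    have := congrFun (congrFun (mapDmat m n μ μr f a) i) j
    exact this
  rw [hLHS, hfin]
  have hri : rp i' = i := Fin.ext (by have := i.isLt; have := hrp i'; omega)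
  have hrj : rp j' = j := Fin.ext (by have := j.isLt; have := hrp j'; omega)
  rw [Matrix.submatrix_apply]
  exact congrArg₂ (fun u v => (SHat m n μ μr f a).submatrix (hAm m n μ a) (hAm m n μ a) u v)
    hri.symm hrj.symm


lemma auxE (hσ : IsRevIdx m n μ μr σ)
    (hrev : ∀ (a : Fin (m + n)) (b : Fin (n + m)),
      (b : ℕ) = m + n - 1 - (a : ℕ) → μr b = μ a)
    (hTM : Tσm m n μ μr σ * Mz m n μ μr f = 1)
    (hMT : Mz m n μ μr f * Tσm m n μ μr σ = 1)
    (β : ℕ) (h : β + 1 < m + n) (i : Fin (μ (blk m n β h))) (j : Fin (μ (blk' m n β h)))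
    (β' : ℕ) (h' : β' + 1 < n + m)
    (i' : Fin (μr (blk' n m β' h'))) (j' : Fin (μr (blk n m β' h')))
    (hββ : β + β' + 2 = m + n)
    (hi : (i' : ℕ) = μ (blk m n β h) - 1 - (i : ℕ))
    (hj : (j' : ℕ) = μ (blk' m n β h) - 1 - (j : ℕ)) :
    PowerSeries.map f (Emat m n μ (blk m n β h) (blk' m n β h) i j) =
      - Fmat n m μr (blk' n m β' h') (blk n m β' h') i' j' := by
  have hbσ := sigma_bij m n μ μr σ hσ hrev
  obtain ⟨s1, s2⟩ := schur1 m n μ μr σ f hTM hMT (blk m n β h)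
  obtain ⟨⟨c1, c2⟩, c3, c4⟩ := schur2 m n μ μr σ f hσ s1 s2
  obtain ⟨⟨d1, d2⟩, d3, d4⟩ := schur3 m n μ μr σ hσ β h
  have hμa : μr (blk' n m β' h') = μ (blk m n β h) := hrev (blk m n β h) (blk' n m β' h') (by show β' + 1 = m + n - 1 - β; omega)
  have hμb : μr (blk n m β' h') = μ (blk' m n β h) := hrev (blk' m n β h) (blk n m β' h') (by show β' = m + n - 1 - (β + 1); omega)
  -- index reversal maps
  have hklA : ∀ k : Fin (μr (blk' n m β' h')), (μ (blk m n β h) - 1 - (k : ℕ)) < μ (blk m n β h) := fun k => by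
    have := k.isLt; omega
  have hklB : ∀ k : Fin (μr (blk n m β' h')), (μ (blk' m n β h) - 1 - (k : ℕ)) < μ (blk' m n β h) := fun k => by
    have := k.isLt; omega
  set rA : Fin (μr (blk' n m β' h')) → Fin (μ (blk m n β h)) := fun k => ⟨μ (blk m n β h) - 1 - (k : ℕ), hklA k⟩ with hrAdef
  set rB : Fin (μr (blk n m β' h')) → Fin (μ (blk' m n β h)) := fun k => ⟨μ (blk' m n β h) - 1 - (k : ℕ), hklB k⟩ with hrBdef
  have hrA : ∀ k, ((rA k) : ℕ) = μ (blk m n β h) - 1 - (k : ℕ) := fun k => rfl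
  have hrB : ∀ l, ((rB l) : ℕ) = μ (blk' m n β h) - 1 - (l : ℕ) := fun l => rfl
  have hrBb : Function.Bijective rB := by
    rw [Fintype.bijective_iff_injective_and_card]
    constructor
    · intro k l hklq
      have hval : (μ (blk' m n β h) - 1 - (k : ℕ)) = (μ (blk' m n β h) - 1 - (l : ℕ)) := congrArg Fin.val hklq
      have := k.isLt
      have := l.isLt
      exact Fin.ext (by omega)
    · simp [hμb]
  set rBE : Fin (μr (blk n m β' h')) ≃ Fin (μ (blk' m n β h)) := Equiv.ofBijective rB hrBb with hrBE
  -- abbreviations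
  set SHA := (SHat m n μ μr f (blk m n β h)).submatrix (hAm m n μ (blk m n β h)) (hAm m n μ (blk m n β h)) with hSHA
  set T' := (TσW m n μ μr σ (blk m n β h)).submatrix (hAm m n μ (blk m n β h)) (hGm m n μ (blk m n β h)) with hT'
  set L'i := Ring.inverse (CG m n μ μr σ (β + 1)) with hL'i
  set CGHB := (CG m n μ μr σ β).submatrix (kHm m n μ β) (kBm m n μ β h) with hCGHB
  set Nbb := (Ring.inverse (CG m n μ μr σ β)).submatrix (kBm m n μ β h) (kBm m n μ β h)
    with hNbb
  have hRIS : Ring.inverse SHA = Sam m n μ μr σ (blk m n β h) := ring_inverse_eq c2 c1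
  -- left-hand side
  have hmapE : (Emat m n μ (blk m n β h) (blk' m n β h)).map (⇑(PowerSeries.map f)) =
      Sam m n μ μr σ (blk m n β h) *
        ((SHat m n μ μr f (blk m n β h)).submatrix (hAm m n μ (blk m n β h)) (hGm m n μ (blk m n β h))).submatrix
          id (kBm m n μ β h) := by
    unfold Emat
    rw [Matrix.map_mul, mapDmat', hRIS, quasE_QDg,
      mapQD m n μ μr f (blk m n β h) (blk m n β h) (blk' m n β h) (hAm m n μ (blk m n β h)) (hGm m n μ (blk m n β h) ∘ kBm m n μ β h)
        (fun _ => rfl) (fun _ => rfl)]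
    rw [Matrix.submatrix_submatrix, Function.comp_id]
  have hEg := Egauss (Sam m n μ μr σ (blk m n β h)) SHA c1 T'
    (Ring.inverse (CG m n μ μr σ ((blk m n β h) : ℕ)))
    ((SHat m n μ μr f (blk m n β h)).submatrix (hAm m n μ (blk m n β h)) (hGm m n μ (blk m n β h))) c4
    (kBm m n μ β h) (kHm m n μ β) (split3 m n μ β h) L'i CGHB d3
  have hLHS : (Emat m n μ (blk m n β h) (blk' m n β h)).map (⇑(PowerSeries.map f)) =
      -((T'.submatrix id (kBm m n μ β h) -
          T'.submatrix id (kHm m n μ β) * L'i * CGHB) * Nbb) :=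
    hmapE.trans hEg
  -- right-hand side: pull back the target quasideterminants
  set QF := T'.submatrix id (kBm m n μ β h) -
      T'.submatrix id (kHm m n μ β) * L'i * CGHB with hQFdef
  have hstb : ((blk' m n β h) : ℕ) + ((blk n m β' h') : ℕ) + 1 = m + n := by show (β + 1) + β' + 1 = m + n; omega
  have hppa : ((blk' n m β' h') : ℕ) = m + n - 1 - ((blk m n β h) : ℕ) := by show β' + 1 = m + n - 1 - β; omega
  have hqqb : ((blk n m β' h') : ℕ) = m + n - 1 - ((blk' m n β h) : ℕ) := by show β' = m + n - 1 - (β + 1); omega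
  have hQF : quasF n m μr (blk' n m β' h') (blk n m β' h') = QF.submatrix rA ⇑rBE := by
    rw [quasF_QDg]
    exact pull m n μ μr σ hσ hrev hbσ (blk' m n β h) (blk m n β h) (blk' m n β h) (blk n m β' h') (blk' n m β' h') (blk n m β' h') hstb hppa hqqb rA hrA ⇑rBE hrB
      (T'.submatrix id (kBm m n μ β h)) (fun _ _ => rfl)
      (T'.submatrix id (kHm m n μ β)) (fun _ _ => rfl)
      CGHB (fun _ _ => rfl)
  have hDt : Dmat n m μr (blk n m β' h') = (Sbm m n μ μr σ β h).submatrix ⇑rBE ⇑rBE := by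
    rw [Dmat_QDg]
    exact pull m n μ μr σ hσ hrev hbσ (blk' m n β h) (blk' m n β h) (blk' m n β h) (blk n m β' h') (blk n m β' h') (blk n m β' h') hstb hqqb hqqb ⇑rBE hrB ⇑rBE hrB
      ((CG m n μ μr σ β).submatrix (kBm m n μ β h) (kBm m n μ β h)) (fun _ _ => rfl)
      ((CG m n μ μr σ β).submatrix (kBm m n μ β h) (kHm m n μ β)) (fun _ _ => rfl)
      ((CG m n μ μr σ β).submatrix (kHm m n μ β) (kBm m n μ β h)) (fun _ _ => rfl)
  have hmul1 : (Sbm m n μ μr σ β h).submatrix ⇑rBE ⇑rBE * Nbb.submatrix ⇑rBE ⇑rBE = 1 := by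
    rw [Matrix.submatrix_mul_equiv, d1]
    exact submatrix_one_inj _ rBE.injective
  have hmul2 : Nbb.submatrix ⇑rBE ⇑rBE * (Sbm m n μ μr σ β h).submatrix ⇑rBE ⇑rBE = 1 := by
    rw [Matrix.submatrix_mul_equiv, d2]
    exact submatrix_one_inj _ rBE.injective
  have hDt' : Dmat' n m μr (blk n m β' h') = Nbb.submatrix ⇑rBE ⇑rBE := by
    unfold Dmat'
    rw [hDt]
    exact ring_inverse_eq hmul1 hmul2
  have hF : Fmat n m μr (blk' n m β' h') (blk n m β' h') = ((QF * Nbb)).submatrix rA ⇑rBE := by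
    unfold Fmat
    rw [hQF, hDt', Matrix.submatrix_mul_equiv]
  -- conclusion
  have hLHS' : PowerSeries.map f (Emat m n μ (blk m n β h) (blk' m n β h) i j) = -(QF * Nbb) i j :=
    congrFun (congrFun hLHS i) j
  show PowerSeries.map f (Emat m n μ (blk m n β h) (blk' m n β h) i j) = -Fmat n m μr (blk' n m β' h') (blk n m β' h') i' j'
  rw [hLHS', hF]
  have hri : rA i' = i := Fin.ext (by have := i.isLt; have := hrA i'; omega)
  have hrj : rBE j' = j := Fin.ext (by
    have h1 := hrB j'
    have h2 : ((rBE j') : ℕ) = ((rB j') : ℕ) := rfl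
    have := j.isLt
    omega)
  exact congrArg Neg.neg
    (congrArg₂ (fun u v => (QF * Nbb) u v) hri.symm hrj.symm)

lemma auxF (hσ : IsRevIdx m n μ μr σ)
    (hrev : ∀ (a : Fin (m + n)) (b : Fin (n + m)),
      (b : ℕ) = m + n - 1 - (a : ℕ) → μr b = μ a)
    (hTM : Tσm m n μ μr σ * Mz m n μ μr f = 1)
    (hMT : Mz m n μ μr f * Tσm m n μ μr σ = 1)
    (β : ℕ) (h : β + 1 < m + n) (i : Fin (μ (blk' m n β h))) (j : Fin (μ (blk m n β h)))
    (β' : ℕ) (h' : β' + 1 < n + m)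
    (i' : Fin (μr (blk n m β' h'))) (j' : Fin (μr (blk' n m β' h')))
    (hββ : β + β' + 2 = m + n)
    (hi : (i' : ℕ) = μ (blk' m n β h) - 1 - (i : ℕ))
    (hj : (j' : ℕ) = μ (blk m n β h) - 1 - (j : ℕ)) :
    PowerSeries.map f (Fmat m n μ (blk' m n β h) (blk m n β h) i j) =
      - Emat n m μr (blk n m β' h') (blk' n m β' h') i' j' := by
  have hbσ := sigma_bij m n μ μr σ hσ hrev
  obtain ⟨s1, s2⟩ := schur1 m n μ μr σ f hTM hMT (blk m n β h)
  obtain ⟨⟨c1, c2⟩, c3, c4⟩ := schur2 m n μ μr σ f hσ s1 s2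
  obtain ⟨⟨d1, d2⟩, d3, d4⟩ := schur3 m n μ μr σ hσ β h
  have hμa : μr (blk' n m β' h') = μ (blk m n β h) := hrev (blk m n β h) (blk' n m β' h') (by show β' + 1 = m + n - 1 - β; omega)
  have hμb : μr (blk n m β' h') = μ (blk' m n β h) := hrev (blk' m n β h) (blk n m β' h') (by show β' = m + n - 1 - (β + 1); omega)
  have hklA : ∀ k : Fin (μr (blk' n m β' h')), (μ (blk m n β h) - 1 - (k : ℕ)) < μ (blk m n β h) := fun k => by
    have := k.isLt; omega
  have hklB : ∀ k : Fin (μr (blk n m β' h')), (μ (blk' m n β h) - 1 - (k : ℕ)) < μ (blk' m n β h) := fun k => by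
    have := k.isLt; omega
  set rA : Fin (μr (blk' n m β' h')) → Fin (μ (blk m n β h)) := fun k => ⟨μ (blk m n β h) - 1 - (k : ℕ), hklA k⟩ with hrAdef
  set rB : Fin (μr (blk n m β' h')) → Fin (μ (blk' m n β h)) := fun k => ⟨μ (blk' m n β h) - 1 - (k : ℕ), hklB k⟩ with hrBdef
  have hrA : ∀ k, ((rA k) : ℕ) = μ (blk m n β h) - 1 - (k : ℕ) := fun k => rfl
  have hrB : ∀ l, ((rB l) : ℕ) = μ (blk' m n β h) - 1 - (l : ℕ) := fun l => rfl
  have hrBb : Function.Bijective rB := by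
    rw [Fintype.bijective_iff_injective_and_card]
    constructor
    · intro k l hklq
      have hval : (μ (blk' m n β h) - 1 - (k : ℕ)) = (μ (blk' m n β h) - 1 - (l : ℕ)) := congrArg Fin.val hklq
      have := k.isLt
      have := l.isLt
      exact Fin.ext (by omega)
    · simp [hμb]
  set rBE : Fin (μr (blk n m β' h')) ≃ Fin (μ (blk' m n β h)) := Equiv.ofBijective rB hrBb with hrBE
  set SHA := (SHat m n μ μr f (blk m n β h)).submatrix (hAm m n μ (blk m n β h)) (hAm m n μ (blk m n β h)) with hSHA
  set T'' := (TσW m n μ μr σ (blk m n β h)).submatrix (hGm m n μ (blk m n β h)) (hAm m n μ (blk m n β h)) with hT''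
  set L'i := Ring.inverse (CG m n μ μr σ (β + 1)) with hL'i
  set CGBH := (CG m n μ μr σ β).submatrix (kBm m n μ β h) (kHm m n μ β) with hCGBH
  set Nbb := (Ring.inverse (CG m n μ μr σ β)).submatrix (kBm m n μ β h) (kBm m n μ β h)
    with hNbb
  have hRIS : Ring.inverse SHA = Sam m n μ μr σ (blk m n β h) := ring_inverse_eq c2 c1
  have hmapF : (Fmat m n μ (blk' m n β h) (blk m n β h)).map (⇑(PowerSeries.map f)) =
      ((SHat m n μ μr f (blk m n β h)).submatrix (hGm m n μ (blk m n β h)) (hAm m n μ (blk m n β h))).submatrix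
          (kBm m n μ β h) id * Sam m n μ μr σ (blk m n β h) := by
    unfold Fmat
    rw [Matrix.map_mul, mapDmat', hRIS, quasF_QDg,
      mapQD m n μ μr f (blk m n β h) (blk' m n β h) (blk m n β h) (hGm m n μ (blk m n β h) ∘ kBm m n μ β h) (hAm m n μ (blk m n β h))
        (fun _ => rfl) (fun _ => rfl)]
    rw [Matrix.submatrix_submatrix, Function.comp_id]
  have hFg := Fgauss SHA (Sam m n μ μr σ (blk m n β h)) c2 T''
    (Ring.inverse (CG m n μ μr σ ((blk m n β h) : ℕ)))
    ((SHat m n μ μr f (blk m n β h)).submatrix (hGm m n μ (blk m n β h)) (hAm m n μ (blk m n β h))) c3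
    (kBm m n μ β h) (kHm m n μ β) (split3 m n μ β h) L'i CGBH d4
  have hLHS : (Fmat m n μ (blk' m n β h) (blk m n β h)).map (⇑(PowerSeries.map f)) =
      -(Nbb * (T''.submatrix (kBm m n μ β h) id -
          CGBH * L'i * T''.submatrix (kHm m n μ β) id)) :=
    hmapF.trans hFg
  set QE := T''.submatrix (kBm m n μ β h) id -
      CGBH * L'i * T''.submatrix (kHm m n μ β) id with hQEdef
  have hstb : ((blk' m n β h) : ℕ) + ((blk n m β' h') : ℕ) + 1 = m + n := by show (β + 1) + β' + 1 = m + n; omega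
  have hppa : ((blk' n m β' h') : ℕ) = m + n - 1 - ((blk m n β h) : ℕ) := by show β' + 1 = m + n - 1 - β; omega
  have hqqb : ((blk n m β' h') : ℕ) = m + n - 1 - ((blk' m n β h) : ℕ) := by show β' = m + n - 1 - (β + 1); omega
  have hQE : quasE n m μr (blk n m β' h') (blk' n m β' h') = QE.submatrix ⇑rBE rA := by
    rw [quasE_QDg]
    exact pull m n μ μr σ hσ hrev hbσ (blk' m n β h) (blk' m n β h) (blk m n β h) (blk n m β' h') (blk n m β' h') (blk' n m β' h') hstb hqqb hppa ⇑rBE hrB rA hrA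
      (T''.submatrix (kBm m n μ β h) id) (fun _ _ => rfl)
      CGBH (fun _ _ => rfl)
      (T''.submatrix (kHm m n μ β) id) (fun _ _ => rfl)
  have hDt : Dmat n m μr (blk n m β' h') = (Sbm m n μ μr σ β h).submatrix ⇑rBE ⇑rBE := by
    rw [Dmat_QDg]
    exact pull m n μ μr σ hσ hrev hbσ (blk' m n β h) (blk' m n β h) (blk' m n β h) (blk n m β' h') (blk n m β' h') (blk n m β' h') hstb hqqb hqqb ⇑rBE hrB ⇑rBE hrB
      ((CG m n μ μr σ β).submatrix (kBm m n μ β h) (kBm m n μ β h)) (fun _ _ => rfl)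
      ((CG m n μ μr σ β).submatrix (kBm m n μ β h) (kHm m n μ β)) (fun _ _ => rfl)
      ((CG m n μ μr σ β).submatrix (kHm m n μ β) (kBm m n μ β h)) (fun _ _ => rfl)
  have hmul1 : (Sbm m n μ μr σ β h).submatrix ⇑rBE ⇑rBE * Nbb.submatrix ⇑rBE ⇑rBE = 1 := by
    rw [Matrix.submatrix_mul_equiv, d1]
    exact submatrix_one_inj _ rBE.injective
  have hmul2 : Nbb.submatrix ⇑rBE ⇑rBE * (Sbm m n μ μr σ β h).submatrix ⇑rBE ⇑rBE = 1 := by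
    rw [Matrix.submatrix_mul_equiv, d2]
    exact submatrix_one_inj _ rBE.injective
  have hDt' : Dmat' n m μr (blk n m β' h') = Nbb.submatrix ⇑rBE ⇑rBE := by
    unfold Dmat'
    rw [hDt]
    exact ring_inverse_eq hmul1 hmul2
  have hE : Emat n m μr (blk n m β' h') (blk' n m β' h') = ((Nbb * QE)).submatrix ⇑rBE rA := by
    unfold Emat
    rw [hQE, hDt', Matrix.submatrix_mul_equiv]
  have hLHS' : PowerSeries.map f (Fmat m n μ (blk' m n β h) (blk m n β h) i j) = -(Nbb * QE) i j :=
    congrFun (congrFun hLHS i) j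
  show PowerSeries.map f (Fmat m n μ (blk' m n β h) (blk m n β h) i j) = -Emat n m μr (blk n m β' h') (blk' n m β' h') i' j'
  rw [hLHS', hE]
  have hri : rBE i' = i := Fin.ext (by
    have h1 := hrB i'
    have h2 : ((rBE i') : ℕ) = ((rB i') : ℕ) := rfl
    have := i.isLt
    omega)
  have hrj : rA j' = j := Fin.ext (by have := j.isLt; have := hrA j'; omega)
  exact congrArg Neg.neg
    (congrArg₂ (fun u v => (Nbb * QE) u v) hri.symm hrj.symm)

end ZMain


/-- **Proposition 4.4.** For the swap map `ζ_{M|N} = ρ_{M|N} ∘ ω_{M|N}` and the reversed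
composition `μʳ` of `(N|M)` one has, for all admissible `a, i, j`:
`ζ(D_{a;i,j}(u)) = D'_{m+n+1-a; μ_a+1-i, μ_a+1-j}(u)`,
`ζ(E_{a;i,j}(u)) = -F_{m+n-a; μ_a+1-i, μ_{a+1}+1-j}(u)`,
`ζ(F_{a;i,j}(u)) = -E_{m+n-a; μ_{a+1}+1-i, μ_a+1-j}(u)`
(series on the left in `Y(gl_{M|N})`, on the right in `Y(gl_{N|M})`; everything is
0-indexed here, so the reversal hypotheses are phrased numerically). -/
theorem zeta_on_gauss_generators
    (hrev : ∀ (a : Fin (m + n)) (b : Fin (n + m)),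
      (b : ℕ) = m + n - 1 - (a : ℕ) → μr b = μ a)
    (σ : CIdx m n μ → CIdx n m μr) (hσ : IsRevIdx m n μ μr σ)
    (ρ : Yc m n μ ≃ₐ[ℂ] Yc n m μr) (hρ : IsRhoC m n μ μr σ ⇑ρ)
    (ω : Yc m n μ ≃ₐ[ℂ] Yc m n μ) (hω : IsOmegaC m n μ ω.toAlgHom.toRingHom) :
    (∀ (a : Fin (m + n)) (i j : Fin (μ a)) (a' : Fin (n + m))
        (i' j' : Fin (μr a')),
      ((a' : ℕ) = m + n - 1 - (a : ℕ)) →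
      ((i' : ℕ) = μ a - 1 - (i : ℕ)) → ((j' : ℕ) = μ a - 1 - (j : ℕ)) →
      PowerSeries.map (ρ.toAlgHom.comp ω.toAlgHom).toRingHom (Dmat m n μ a i j) =
        Dmat' n m μr a' i' j') ∧
    (∀ (β : ℕ) (h : β + 1 < m + n) (i : Fin (μ (blk m n β h)))
        (j : Fin (μ (blk' m n β h))) (β' : ℕ) (h' : β' + 1 < n + m)
        (i' : Fin (μr (blk' n m β' h'))) (j' : Fin (μr (blk n m β' h'))),
      (β + β' + 2 = m + n) →
      ((i' : ℕ) = μ (blk m n β h) - 1 - (i : ℕ)) →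
      ((j' : ℕ) = μ (blk' m n β h) - 1 - (j : ℕ)) →
      PowerSeries.map (ρ.toAlgHom.comp ω.toAlgHom).toRingHom
          (Emat m n μ (blk m n β h) (blk' m n β h) i j) =
        - Fmat n m μr (blk' n m β' h') (blk n m β' h') i' j') ∧
    (∀ (β : ℕ) (h : β + 1 < m + n) (i : Fin (μ (blk' m n β h)))
        (j : Fin (μ (blk m n β h))) (β' : ℕ) (h' : β' + 1 < n + m)
        (i' : Fin (μr (blk n m β' h'))) (j' : Fin (μr (blk' n m β' h'))),
      (β + β' + 2 = m + n) →
      ((i' : ℕ) = μ (blk' m n β h) - 1 - (i : ℕ)) →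
      ((j' : ℕ) = μ (blk m n β h) - 1 - (j : ℕ)) →
      PowerSeries.map (ρ.toAlgHom.comp ω.toAlgHom).toRingHom
          (Fmat m n μ (blk' m n β h) (blk m n β h) i j) =
        - Emat n m μr (blk n m β' h') (blk' n m β' h') i' j') := by
  obtain ⟨hz1, hz2⟩ := ZMain.zeta_T m n μ μr σ ρ hρ ω hω
  refine ⟨?_, ?_, ?_⟩
  · intro a i j a' i' j' h1 h2 h3
    exact ZMain.auxD m n μ μr σ _ hσ hrev hz2 hz1 a i j a' i' j' h1 h2 h3
  · intro β h i j β' h' i' j' hββ hi hj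
    exact ZMain.auxE m n μ μr σ _ hσ hrev hz2 hz1 β h i j β' h' i' j' hββ hi hj
  · intro β h i j β' h' i' j' hββ hi hj
    exact ZMain.auxF m n μ μr σ _ hσ hrev hz2 hz1 β h i j β' h' i' j' hββ hi hj

end
end
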